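/- arXiv:1504.03839 — 12 statements merged into one kernel-verified Lean document; each statement's English description precedes it below -/
import Mathlib

section
/- Let k be an even positive integer and n ≥ 2, let T be a tensor of order k and dimension n, and let S be a nonempty proper subset of {1,…,n}. Suppose λ ∈ ℝ is an H-eigenvalue of T such that T z^k ≥ λ for every z ∈ ℝ^n with Σ_{i=1}^n z_i^k = 1. Then λ ≤ μ for every H-eigenvalue μ of the principal subtensor T[S]. -/
open Finset

/-- `T x^k` for a tensor `T` of order `k` on index type `ι`:
`T x^k = Σ_{i_1,…,i_k} T(i_1,…,i_k) x_{i_1} ⋯ x_{i_k}`. -/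
def tensorApply {k : ℕ} {ι : Type*} [Fintype ι] (T : (Fin k → ι) → ℝ) (x : ι → ℝ) : ℝ :=
  ∑ f : Fin k → ι, T f * ∏ j : Fin k, x (f j)

/-- The H-eigenvalue equation: for every `i`,
`Σ_{i_2,…,i_k} T(i,i_2,…,i_k) x_{i_2} ⋯ x_{i_k} = λ x_i^(k-1)`. -/
def HEigEq {k : ℕ} {ι : Type*} [Fintype ι] [DecidableEq ι] (hk : 0 < k)
    (T : (Fin k → ι) → ℝ) (lam : ℝ) (x : ι → ℝ) : Prop :=
  ∀ i : ι,
    (∑ f : Fin k → ι,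
      if f ⟨0, hk⟩ = i then T f * ∏ j ∈ Finset.univ.erase (⟨0, hk⟩ : Fin k), x (f j) else 0)
    = lam * x i ^ (k - 1)

/-- `lam` is an H-eigenvalue of the tensor `T`. -/
def IsHEig {k : ℕ} {ι : Type*} [Fintype ι] [DecidableEq ι] (hk : 0 < k)
    (T : (Fin k → ι) → ℝ) (lam : ℝ) : Prop :=
  ∃ x : ι → ℝ, x ≠ 0 ∧ HEigEq hk T lam x

/-- if `k` is even and positive, `n ≥ 2`, `λ` is an H-eigenvalue of `T` with
`T z^k ≥ λ` for all `z` with `Σ z_i^k = 1`, then `λ ≤ μ` for every H-eigenvalue `μ` of the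
principal subtensor `T[S]`, where `S` is a nonempty proper subset of the index set. -/
theorem stmt0 (k n : ℕ) (hk : 0 < k) (hke : Even k) (hn : 2 ≤ n)
    (T : (Fin k → Fin n) → ℝ)
    (S : Finset (Fin n)) (hS : S.Nonempty) (hSne : S ≠ Finset.univ)
    (lam : ℝ) (hlam : IsHEig hk T lam)
    (hmin : ∀ z : Fin n → ℝ, (∑ i : Fin n, z i ^ k) = 1 → lam ≤ tensorApply T z)
    (mu : ℝ)
    (hmu : IsHEig hk (fun f : Fin k → {i : Fin n // i ∈ S} => T (fun j => (f j : Fin n))) mu) :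
    lam ≤ mu := by

  classical
  obtain ⟨y, hy0, hyeq⟩ := hmu
  set T' : (Fin k → {i : Fin n // i ∈ S}) → ℝ :=
    fun f => T (fun j => (f j : Fin n)) with hT'
  set z : Fin n → ℝ := fun i => if h : i ∈ S then y ⟨i, h⟩ else 0 with hz
  have hz' : ∀ i : {i : Fin n // i ∈ S}, z (i : Fin n) = y i := fun i => dif_pos i.2
  set c : ℝ := ∑ i : {i : Fin n // i ∈ S}, y i ^ k with hc
  have hcpos : 0 < c := by
    obtain ⟨i0, hi0⟩ : ∃ i, y i ≠ 0 := by
      by_contra h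
      push_neg at h
      exact hy0 (funext h)
    exact Finset.sum_pos' (fun i _ => hke.pow_nonneg _)
      ⟨i0, Finset.mem_univ _, hke.pow_pos hi0⟩
  -- contraction of eigen equation
  have hcontr : tensorApply T' y = mu * c := by
    have h1 : ∑ i : {i : Fin n // i ∈ S}, y i *
        (∑ f : Fin k → {i : Fin n // i ∈ S},
          if f ⟨0, hk⟩ = i then T' f * ∏ j ∈ Finset.univ.erase (⟨0, hk⟩ : Fin k), y (f j)
          else 0) = tensorApply T' y := by
      simp_rw [Finset.mul_sum, mul_ite, mul_zero]
      rw [Finset.sum_comm]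
      simp_rw [Finset.sum_ite_eq, Finset.mem_univ, if_true]
      rw [tensorApply]
      refine Finset.sum_congr rfl fun f _ => ?_
      rw [← Finset.mul_prod_erase Finset.univ (fun j => y (f j))
        (Finset.mem_univ (⟨0, hk⟩ : Fin k))]
      ring
    have h2 : ∑ i : {i : Fin n // i ∈ S}, y i *
        (∑ f : Fin k → {i : Fin n // i ∈ S},
          if f ⟨0, hk⟩ = i then T' f * ∏ j ∈ Finset.univ.erase (⟨0, hk⟩ : Fin k), y (f j)
          else 0) = mu * c := by
      rw [hc, Finset.mul_sum]
      refine Finset.sum_congr rfl fun i _ => ?_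
      rw [hyeq i]
      have : y i * y i ^ (k - 1) = y i ^ k := by
        rw [← pow_succ', Nat.sub_add_cancel hk]
      rw [← mul_assoc, mul_comm (y i) mu, mul_assoc, this]
    rw [← h1, h2]
  -- restriction
  have hrestr : tensorApply T z = tensorApply T' y := by
    rw [tensorApply, tensorApply]
    have hinj : ∀ f ∈ (Finset.univ : Finset (Fin k → {i : Fin n // i ∈ S})),
        ∀ g ∈ (Finset.univ : Finset (Fin k → {i : Fin n // i ∈ S})),
        (fun j => ((f j : Fin n))) = (fun j => ((g j : Fin n))) → f = g := by
      intro f _ g _ h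
      funext j
      exact Subtype.ext (congrFun h j)
    have h0 : ∀ f ∈ (Finset.univ : Finset (Fin k → Fin n)),
        f ∉ Finset.univ.image
          (fun (g : Fin k → {i : Fin n // i ∈ S}) (j : Fin k) => (g j : Fin n)) →
        T f * ∏ j, z (f j) = 0 := by
      intro f _ hf
      have hj : ∃ j, f j ∉ S := by
        by_contra h
        push_neg at h
        exact hf (Finset.mem_image.2 ⟨fun j => ⟨f j, h j⟩, Finset.mem_univ _, rfl⟩)
      obtain ⟨j, hj⟩ := hj
      have hzj : z (f j) = 0 := dif_neg hj
      rw [Finset.prod_eq_zero (Finset.mem_univ j) hzj, mul_zero]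
    rw [← Finset.sum_subset (Finset.subset_univ _) h0, Finset.sum_image hinj]
    refine Finset.sum_congr rfl fun f _ => ?_
    simp only [hz']
    rfl
  have hTz : tensorApply T z = mu * c := hrestr.trans hcontr
  -- scaling
  set t : ℝ := c ^ (-(k : ℝ)⁻¹) with ht
  have hk0 : (k : ℝ) ≠ 0 := Nat.cast_ne_zero.2 hk.ne'
  have htk : t ^ k = c⁻¹ := by
    rw [ht, ← Real.rpow_natCast (c ^ (-(k : ℝ)⁻¹)) k, ← Real.rpow_mul hcpos.le,
      neg_mul, inv_mul_cancel₀ hk0]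
    exact Real.rpow_neg_one c
  have hsumz : ∑ i : Fin n, z i ^ k = c := by
    rw [← Finset.sum_subset (Finset.subset_univ S)
      (by intro i _ hi; rw [hz]; simp [dif_neg hi, zero_pow hk.ne'])]
    rw [← Finset.sum_attach S (fun i => z i ^ k), hc, Finset.univ_eq_attach]
    exact Finset.sum_congr rfl fun i _ => by rw [hz']
  have hhom : tensorApply T (fun i => t * z i) = t ^ k * tensorApply T z := by
    rw [tensorApply, tensorApply, Finset.mul_sum]
    refine Finset.sum_congr rfl fun f _ => ?_
    rw [Finset.prod_mul_distrib, Finset.prod_const, Finset.card_univ, Fintype.card_fin]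
    ring
  have h1 : ∑ i : Fin n, (t * z i) ^ k = 1 := by
    simp_rw [mul_pow]
    rw [← Finset.mul_sum, hsumz, htk]
    exact inv_mul_cancel₀ hcpos.ne'
  have hfin := hmin _ h1
  rw [hhom, htk, hTz] at hfin
  calc lam ≤ c⁻¹ * (mu * c) := hfin
    _ = mu := by field_simp
end

section
/- Let k be an even positive integer and n ≥ 2, let T be a tensor of order k and dimension n, and let S be a nonempty proper subset of {1,…,n}. Suppose λ ∈ ℝ is an H-eigenvalue of T such that T z^k ≤ λ for every z ∈ ℝ^n with Σ_{i=1}^n z_i^k = 1. Then μ ≤ λ for every H-eigenvalue μ of the principal subtensor T[S]. -/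
open Finset

lemma tensorApply_of_eig {k : ℕ} {ι : Type*} [Fintype ι] [DecidableEq ι] (hk : 0 < k)
    (T : (Fin k → ι) → ℝ) (lam : ℝ) (x : ι → ℝ) (h : HEigEq hk T lam x) :
    tensorApply T x = lam * ∑ i : ι, x i ^ k := by
  have key : (∑ i : ι,
      (∑ f : Fin k → ι,
        if f ⟨0, hk⟩ = i then T f * ∏ j ∈ Finset.univ.erase (⟨0, hk⟩ : Fin k), x (f j) else 0)
        * x i) = tensorApply T x := by
    simp_rw [Finset.sum_mul, ite_mul, zero_mul]
    rw [Finset.sum_comm]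
    unfold tensorApply
    refine Finset.sum_congr rfl fun f _ => ?_
    rw [Finset.sum_ite_eq]
    simp only [Finset.mem_univ, if_true]
    rw [← Finset.mul_prod_erase Finset.univ (fun j => x (f j)) (Finset.mem_univ (⟨0, hk⟩ : Fin k))]
    ring
  rw [← key]
  rw [Finset.mul_sum]
  refine Finset.sum_congr rfl fun i _ => ?_
  rw [h i, mul_assoc, ← pow_succ, Nat.sub_add_cancel hk]

lemma tensorApply_smul {k : ℕ} {ι : Type*} [Fintype ι]
    (T : (Fin k → ι) → ℝ) (c : ℝ) (x : ι → ℝ) :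
    tensorApply T (fun i => c * x i) = c ^ k * tensorApply T x := by
  unfold tensorApply
  rw [Finset.mul_sum]
  refine Finset.sum_congr rfl fun f _ => ?_
  rw [Finset.prod_mul_distrib, Finset.prod_const, Finset.card_univ, Fintype.card_fin]
  ring

/-- if `k` is even and positive, `n ≥ 2`, `λ` is an H-eigenvalue of `T` with
`T z^k ≤ λ` for all `z` with `Σ z_i^k = 1`, then `μ ≤ λ` for every H-eigenvalue `μ` of the
principal subtensor `T[S]`, where `S` is a nonempty proper subset of the index set. -/
theorem stmt1 (k n : ℕ) (hk : 0 < k) (hke : Even k) (hn : 2 ≤ n)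
    (T : (Fin k → Fin n) → ℝ)
    (S : Finset (Fin n)) (hS : S.Nonempty) (hSne : S ≠ Finset.univ)
    (lam : ℝ) (hlam : IsHEig hk T lam)
    (hmax : ∀ z : Fin n → ℝ, (∑ i : Fin n, z i ^ k) = 1 → tensorApply T z ≤ lam)
    (mu : ℝ)
    (hmu : IsHEig hk (fun f : Fin k → {i : Fin n // i ∈ S} => T (fun j => (f j : Fin n))) mu) :
    mu ≤ lam := by
  classical
  obtain ⟨y, hy0, heig⟩ := hmu
  obtain ⟨i0, hi0⟩ := Function.ne_iff.mp hy0
  obtain ⟨d, hd⟩ := hS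
  set s : ℝ := ∑ i : {i : Fin n // i ∈ S}, y i ^ k with hs_def
  have hs : 0 < s := by
    apply Finset.sum_pos' (fun i _ => hke.pow_nonneg (y i))
    exact ⟨i0, Finset.mem_univ _, hke.pow_pos (by simpa using hi0)⟩
  set c : ℝ := s ^ (-(k : ℝ)⁻¹) with hc_def
  have hkR : (k : ℝ) ≠ 0 := Nat.cast_ne_zero.mpr hk.ne'
  have hck : c ^ k = s⁻¹ := by
    rw [hc_def, ← Real.rpow_natCast (s ^ (-(k : ℝ)⁻¹)) k, ← Real.rpow_mul hs.le,
      neg_mul, inv_mul_cancel₀ hkR, Real.rpow_neg_one]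
  set Y : Fin n → ℝ := fun i => if h : i ∈ S then y ⟨i, h⟩ else 0 with hY_def
  have hYcoe : ∀ i : {i : Fin n // i ∈ S}, Y (↑i) = y i := fun i => dif_pos i.2
  have hYsum : ∑ i : Fin n, Y i ^ k = s := by
    have h2 : ∑ i ∈ S, Y i ^ k = s := by
      rw [← Finset.sum_coe_sort S (fun i => Y i ^ k), hs_def]
      exact Finset.sum_congr rfl fun i _ => by rw [hYcoe]
    rw [← h2]
    symm
    apply Finset.sum_subset (Finset.subset_univ S)
    intro i _ hi
    simp [hY_def, hi, zero_pow hk.ne']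
  have hembed : tensorApply T Y =
      tensorApply (fun f : Fin k → {i : Fin n // i ∈ S} => T (fun j => (f j : Fin n))) y := by
    unfold tensorApply
    rw [← Finset.sum_filter_of_ne
      (p := fun f : Fin k → Fin n => ∀ j, f j ∈ S) (s := Finset.univ)
      (f := fun f => T f * ∏ j : Fin k, Y (f j)) ?_]
    · refine Finset.sum_nbij'
        (i := fun f j => if h : f j ∈ S then (⟨f j, h⟩ : {i : Fin n // i ∈ S}) else ⟨d, hd⟩)
        (j := fun g j => ((g j : Fin n)))
        (fun f hf => Finset.mem_univ _) (fun g hg => ?_) (fun f hf => ?_) (fun g hg => ?_)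
        (fun f hf => ?_)
      · simp only [Finset.mem_filter, Finset.mem_univ, true_and]
        exact fun j => (g j).2
      · simp only [Finset.mem_filter, Finset.mem_univ, true_and] at hf
        funext j
        simp only []
        rw [dif_pos (hf j)]
      · funext j
        simp only []
        rw [dif_pos (g j).2]
      · simp only [Finset.mem_filter, Finset.mem_univ, true_and] at hf
        simp only []
        congr 1
        · congr 1
          funext j
          rw [dif_pos (hf j)]
        · refine Finset.prod_congr rfl fun j _ => ?_
          rw [dif_pos (hf j)]
          exact hYcoe ⟨f j, hf j⟩
    · intro f _ hne j
      by_contra hj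
      apply hne
      rw [mul_eq_zero]
      right
      apply Finset.prod_eq_zero (Finset.mem_univ j)
      simp [hY_def, hj]
  set z : Fin n → ℝ := fun i => c * Y i with hz_def
  have hz1 : (∑ i : Fin n, z i ^ k) = 1 := by
    simp_rw [hz_def, mul_pow, ← Finset.mul_sum, hYsum, hck]
    exact inv_mul_cancel₀ hs.ne'
  have hTz : tensorApply T z = mu := by
    rw [hz_def, tensorApply_smul, hembed,
      tensorApply_of_eig hk _ mu y heig, ← hs_def, hck]
    field_simp
  have := hmax z hz1
  linarith
end

section
/- Let k ≥ 2 and n ≥ 2, and let T be a nonnegative, weakly irreducible tensor of order k and dimension n. Suppose ρ ∈ ℝ is an H-eigenvalue of T admitting a strictly positive H-eigenvector. Then for every nonempty proper subset S of {1,…,n}, every H-eigenvalue μ of the principal subtensor T[S] that admits a nonnegative nonzero H-eigenvector satisfies μ < ρ. -/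
open Finset

/-- let `T` be a nonnegative weakly irreducible tensor of order `k ≥ 2` and
dimension `n ≥ 2`, and let `ρ` be an H-eigenvalue of `T` with a strictly positive
H-eigenvector.  Then for every nonempty proper subset `S` of the index set, every
H-eigenvalue `μ` of the principal subtensor `T[S]` admitting a nonnegative nonzero
H-eigenvector satisfies `μ < ρ`. -/
theorem stmt2 (k n : ℕ) (hk : 2 ≤ k) (hn : 2 ≤ n)
    (T : (Fin k → Fin n) → ℝ)
    (hnonneg : ∀ f : Fin k → Fin n, 0 ≤ T f)
    (hirr : ∀ I : Finset (Fin n), I.Nonempty → I ≠ Finset.univ →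
      ∃ i ∈ I, ∃ f : Fin k → Fin n, f ⟨0, by omega⟩ = i ∧ 0 < T f ∧
        ∃ j : Fin k, j ≠ (⟨0, by omega⟩ : Fin k) ∧ f j ∉ I)
    (rho : ℝ) (z : Fin n → ℝ) (hz : ∀ i : Fin n, 0 < z i)
    (hrho : HEigEq (show 0 < k by omega) T rho z)
    (S : Finset (Fin n)) (hS : S.Nonempty) (hSne : S ≠ Finset.univ)
    (mu : ℝ) (x : {i : Fin n // i ∈ S} → ℝ) (hxnn : ∀ i, 0 ≤ x i) (hx0 : x ≠ 0)
    (hmu : HEigEq (show 0 < k by omega)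
      (fun f : Fin k → {i : Fin n // i ∈ S} => T (fun j => (f j : Fin n))) mu x) :
    mu < rho := by
  classical
  have hk0 : 0 < k := by omega
  set e0 : Fin k := ⟨0, hk0⟩ with he0
  -- the extension of x by zero
  set y : Fin n → ℝ := fun i => if h : i ∈ S then x ⟨i, h⟩ else 0 with hy
  have hynn : ∀ i, 0 ≤ y i := by
    intro i; simp only [hy]; split
    · exact hxnn _
    · exact le_refl 0
  obtain ⟨i1, hi1⟩ : ∃ i, x i ≠ 0 := Function.ne_iff.mp hx0
  have hx1 : 0 < x i1 := (hxnn i1).lt_of_ne (Ne.symm hi1)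
  have hne : (Finset.univ : Finset {i : Fin n // i ∈ S}).Nonempty := ⟨i1, mem_univ _⟩
  set c : ℝ := Finset.univ.sup' hne (fun i => x i / z i) with hc
  have hcpos : 0 < c := by
    rw [hc]
    exact lt_of_lt_of_le (div_pos hx1 (hz i1)) (Finset.le_sup' (fun i => x i / z i) (mem_univ i1))
  obtain ⟨i0, -, hi0⟩ := Finset.exists_mem_eq_sup' hne (fun i => x i / z i)
  set w : Fin n → ℝ := fun i => c * z i with hw
  have hwpos : ∀ i, 0 < w i := fun i => mul_pos hcpos (hz i)
  have hyw : ∀ i, y i ≤ w i := by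
    intro i
    by_cases h : i ∈ S
    · have hle : x ⟨i, h⟩ / z i ≤ c := by
        rw [hc]; exact Finset.le_sup' (fun i => x i / z i) (mem_univ ⟨i, h⟩)
      have h2 := (div_le_iff₀ (hz i)).mp hle
      simp only [hy, hw, dif_pos h]; linarith
    · simp only [hy, hw, dif_neg h]; exact (hwpos i).le
  have hy0 : y (i0 : Fin n) = w (i0 : Fin n) := by
    have h1 : x i0 / z (i0 : Fin n) = c := by rw [hc]; exact hi0.symm
    have h2 : x i0 = c * z (i0 : Fin n) := (div_eq_iff (ne_of_gt (hz _))).mp h1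
    simp only [hy, hw, dif_pos i0.2, Subtype.coe_eta]
    exact h2
  -- the eigen equation for w = c • z
  have hrho' : ∀ i : Fin n,
      (∑ f : Fin k → Fin n, if f e0 = i then T f * ∏ j ∈ univ.erase e0, w (f j) else 0)
        = rho * w i ^ (k - 1) := by
    intro i
    have h1 : (∑ f : Fin k → Fin n,
        if f e0 = i then T f * ∏ j ∈ univ.erase e0, z (f j) else 0)
        = rho * z i ^ (k - 1) := hrho i
    have hcard : (univ.erase e0).card = k - 1 := by
      rw [Finset.card_erase_of_mem (mem_univ _), Finset.card_univ, Fintype.card_fin]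
    calc (∑ f : Fin k → Fin n, if f e0 = i then T f * ∏ j ∈ univ.erase e0, w (f j) else 0)
        = ∑ f : Fin k → Fin n,
            c ^ (k - 1) * (if f e0 = i then T f * ∏ j ∈ univ.erase e0, z (f j) else 0) := by
          apply Finset.sum_congr rfl; intro f _
          split
          · simp only [hw]
            rw [Finset.prod_mul_distrib, Finset.prod_const, hcard]; ring
          · rw [mul_zero]
      _ = c ^ (k - 1) * (rho * z i ^ (k - 1)) := by rw [← Finset.mul_sum, h1]
      _ = rho * w i ^ (k - 1) := by simp only [hw]; rw [mul_pow]; ring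
  -- the eigen equation for y, rewritten as a sum over all index functions
  have hmu' : ∀ i : Fin n, i ∈ S →
      (∑ f : Fin k → Fin n, if f e0 = i then T f * ∏ j ∈ univ.erase e0, y (f j) else 0)
        = mu * y i ^ (k - 1) := by
    intro i hi
    have h1 : (∑ f : Fin k → {i : Fin n // i ∈ S},
        if f e0 = ⟨i, hi⟩ then
          T (fun j => (f j : Fin n)) * ∏ j ∈ univ.erase e0, x (f j) else 0)
        = mu * x ⟨i, hi⟩ ^ (k - 1) := hmu ⟨i, hi⟩
    have hemb_inj : Function.Injective
        (fun (g : Fin k → {i : Fin n // i ∈ S}) (j : Fin k) => (g j : Fin n)) := by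
      intro g1 g2 h; funext j; exact Subtype.ext (congrFun h j)
    set emb : (Fin k → {i : Fin n // i ∈ S}) ↪ (Fin k → Fin n) :=
      ⟨fun g j => (g j : Fin n), hemb_inj⟩ with hemb
    have hmem : ∀ f : Fin k → Fin n, f ∈ Finset.univ.map emb ↔ ∀ j, f j ∈ S := by
      intro f
      simp only [Finset.mem_map, Finset.mem_univ, true_and, hemb,
        Function.Embedding.coeFn_mk]
      constructor
      · rintro ⟨g, rfl⟩ j; exact (g j).2
      · intro h; exact ⟨fun j => ⟨f j, h j⟩, rfl⟩
    have hzero : ∀ f : Fin k → Fin n, f ∈ Finset.univ → f ∉ Finset.univ.map emb →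
        (if f e0 = i then T f * ∏ j ∈ univ.erase e0, y (f j) else 0) = 0 := by
      intro f _ hf
      rw [hmem] at hf
      push_neg at hf
      obtain ⟨j, hj⟩ := hf
      by_cases h0 : f e0 = i
      · have hj0 : j ≠ e0 := by rintro rfl; rw [h0] at hj; exact hj hi
        rw [if_pos h0]
        have : y (f j) = 0 := by simp only [hy, dif_neg hj]
        rw [Finset.prod_eq_zero (Finset.mem_erase.mpr ⟨hj0, mem_univ j⟩) this, mul_zero]
      · rw [if_neg h0]
    calc (∑ f : Fin k → Fin n, if f e0 = i then T f * ∏ j ∈ univ.erase e0, y (f j) else 0)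
        = ∑ f ∈ Finset.univ.map emb,
            (if f e0 = i then T f * ∏ j ∈ univ.erase e0, y (f j) else 0) :=
          (Finset.sum_subset (Finset.subset_univ _) hzero).symm
      _ = ∑ g : Fin k → {i : Fin n // i ∈ S},
            (if emb g e0 = i then T (emb g) * ∏ j ∈ univ.erase e0, y (emb g j) else 0) :=
          Finset.sum_map Finset.univ emb _
      _ = ∑ g : Fin k → {i : Fin n // i ∈ S},
            (if g e0 = ⟨i, hi⟩ then
              T (fun j => (g j : Fin n)) * ∏ j ∈ univ.erase e0, x (g j) else 0) := by
          apply Finset.sum_congr rfl; intro g _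
          have hcond : (emb g e0 = i) ↔ (g e0 = ⟨i, hi⟩) := by
            simp only [hemb, Function.Embedding.coeFn_mk, Subtype.ext_iff]
          have hprod : ∀ j : Fin k, y (emb g j : Fin n) = x (g j) := by
            intro j
            simp only [hemb, Function.Embedding.coeFn_mk, hy, dif_pos (g j).2,
              Subtype.coe_eta]
          by_cases h : g e0 = ⟨i, hi⟩
          · rw [if_pos (hcond.mpr h), if_pos h]
            congr 1
            exact Finset.prod_congr rfl (fun j _ => hprod j)
          · rw [if_neg (fun hh => h (hcond.mp hh)), if_neg h]
      _ = mu * x ⟨i, hi⟩ ^ (k - 1) := h1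
      _ = mu * y i ^ (k - 1) := by simp only [hy, dif_pos hi]
  -- termwise comparison
  have hterm_le : ∀ (i : Fin n) (f : Fin k → Fin n),
      (if f e0 = i then T f * ∏ j ∈ univ.erase e0, y (f j) else 0)
      ≤ (if f e0 = i then T f * ∏ j ∈ univ.erase e0, w (f j) else 0) := by
    intro i f
    split
    · exact mul_le_mul_of_nonneg_left
        (Finset.prod_le_prod (fun j _ => hynn _) (fun j _ => hyw _)) (hnonneg f)
    · exact le_refl 0
  -- mu ≤ rho
  have hmule : mu ≤ rho := by
    have h2 := hmu' (i0 : Fin n) i0.2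
    have h3 := hrho' (i0 : Fin n)
    have hsum := Finset.sum_le_sum (fun f (_ : f ∈ (Finset.univ : Finset (Fin k → Fin n))) =>
      hterm_le (i0 : Fin n) f)
    rw [h2, h3, hy0] at hsum
    exact le_of_mul_le_mul_right hsum (pow_pos (hwpos _) _)
  refine lt_of_le_of_ne hmule ?_
  intro heq
  set J : Finset (Fin n) := Finset.univ.filter (fun i => y i = w i) with hJ
  have hi0J : (i0 : Fin n) ∈ J := Finset.mem_filter.mpr ⟨mem_univ _, hy0⟩
  have hJne : J.Nonempty := ⟨_, hi0J⟩
  have hJS : ∀ i ∈ J, i ∈ S := by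
    intro i hiJ
    by_contra h
    have h1 : y i = 0 := by simp only [hy, dif_neg h]
    have h2 := (Finset.mem_filter.mp hiJ).2
    have h3 := hwpos i
    rw [h1] at h2; linarith
  have hJuniv : J ≠ Finset.univ := by
    intro h
    obtain ⟨i, hiS⟩ : ∃ i, i ∉ S := by
      by_contra hall
      push_neg at hall
      exact hSne (Finset.eq_univ_iff_forall.mpr hall)
    exact hiS (hJS i (h ▸ mem_univ i))
  obtain ⟨i, hiJ, f, hf0, hTf, j, hj0, hjJ⟩ := hirr J hJne hJuniv
  have hf0' : f e0 = i := hf0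
  have hj0' : j ≠ e0 := hj0
  have hiS := hJS i hiJ
  have hyi : y i = w i := (Finset.mem_filter.mp hiJ).2
  have hsl : (∑ f' : Fin k → Fin n, if f' e0 = i then T f' * ∏ j' ∈ univ.erase e0, y (f' j') else 0)
      < ∑ f' : Fin k → Fin n, if f' e0 = i then T f' * ∏ j' ∈ univ.erase e0, w (f' j') else 0 := by
    apply Finset.sum_lt_sum (fun f' _ => hterm_le i f')
    refine ⟨f, mem_univ f, ?_⟩
    rw [if_pos hf0', if_pos hf0']
    apply mul_lt_mul_of_pos_left _ hTf
    have hjmem : j ∈ univ.erase e0 := Finset.mem_erase.mpr ⟨hj0', mem_univ _⟩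
    have hyfj : y (f j) < w (f j) :=
      lt_of_le_of_ne (hyw _) (fun h => hjJ (Finset.mem_filter.mpr ⟨mem_univ _, h⟩))
    calc ∏ j' ∈ univ.erase e0, y (f j')
        = y (f j) * ∏ j' ∈ (univ.erase e0).erase j, y (f j') :=
          (Finset.mul_prod_erase (univ.erase e0) (fun j' => y (f j')) hjmem).symm
      _ ≤ y (f j) * ∏ j' ∈ (univ.erase e0).erase j, w (f j') :=
          mul_le_mul_of_nonneg_left
            (Finset.prod_le_prod (fun _ _ => hynn _) (fun _ _ => hyw _)) (hynn _)
      _ < w (f j) * ∏ j' ∈ (univ.erase e0).erase j, w (f j') :=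
          mul_lt_mul_of_pos_right hyfj (Finset.prod_pos (fun _ _ => hwpos _))
      _ = ∏ j' ∈ univ.erase e0, w (f j') := Finset.mul_prod_erase (univ.erase e0) (fun j' => w (f j')) hjmem
  rw [hmu' i hiS, hrho' i, hyi, heq] at hsl
  exact lt_irrefl _ hsl
end

section
/- Let k ≥ 2 and let H be a k-uniform hypergraph with at least one edge. Then there exists a signless Laplacian H-eigenvalue λ of H with λ > Δ(H), where Δ(H) is the maximum vertex degree of H. -/
open Finset

set_option maxHeartbeats 4000000 in
/-- a `k`-uniform hypergraph (`k ≥ 2`) with at least one edge has a signless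
Laplacian H-eigenvalue `λ` with `λ > Δ(H)`, the maximum vertex degree. -/
theorem stmt3 {V : Type*} [Fintype V] [DecidableEq V] [Nonempty V]
    (k : ℕ) (hk : 2 ≤ k)
    (E : Finset (Finset V)) (hunif : ∀ e ∈ E, e.card = k) (hE : E.Nonempty) :
    ∃ (lam : ℝ) (x : V → ℝ), x ≠ 0 ∧
      (∀ v : V,
        lam * x v ^ (k - 1)
          = ((E.filter (fun e => v ∈ e)).card : ℝ) * x v ^ (k - 1)
            + ∑ e ∈ E.filter (fun e => v ∈ e), ∏ w ∈ e.erase v, x w) ∧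
      ((Finset.univ.sup' Finset.univ_nonempty
          (fun v : V => (E.filter (fun e => v ∈ e)).card) : ℕ) : ℝ) < lam := by
  classical
  have hk0 : k ≠ 0 := by omega
  have hk10 : k - 1 ≠ 0 := by omega
  have hkR : (0:ℝ) < k := by exact_mod_cast Nat.pos_of_ne_zero hk0
  set d : V → ℕ := fun v => (E.filter (fun e => v ∈ e)).card with hd
  set f : (V → ℝ) → ℝ :=
    fun x => (∑ v, (d v : ℝ) * x v ^ k) + k * ∑ e ∈ E, ∏ w ∈ e, x w with hf
  -- homogeneity
  have fhom : ∀ (c : ℝ) (x : V → ℝ), f (fun v => c * x v) = c ^ k * f x := by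
    intro c x
    simp only [hf]
    have h1 : ∀ v : V, (d v:ℝ) * (c * x v)^k = c^k * ((d v:ℝ) * x v ^ k) := by
      intro v; rw [mul_pow]; ring
    have h2 : ∀ e ∈ E, ∏ w ∈ e, (c * x w) = c ^ k * ∏ w ∈ e, x w := by
      intro e he
      rw [Finset.prod_mul_distrib, Finset.prod_const, hunif e he]
    rw [Finset.sum_congr rfl (fun v _ => h1 v), ← Finset.mul_sum,
        Finset.sum_congr rfl h2, ← Finset.mul_sum]
    ring
  -- continuity
  have fcont : Continuous f := by
    apply Continuous.add
    · exact continuous_finset_sum _ fun v _ =>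
        continuous_const.mul ((continuous_apply v).pow k)
    · exact continuous_const.mul (continuous_finset_sum _ fun e _ =>
        continuous_finset_prod _ fun w _ => continuous_apply w)
  -- the compact constraint set
  set K : Set (V → ℝ) := {x | (∀ v, 0 ≤ x v) ∧ ∑ v, x v ^ k = 1} with hKdef
  have hKc : IsCompact K := by
    have hsub : K ⊆ Set.Icc 0 1 := by
      rintro x ⟨hx0, hx1⟩
      refine ⟨fun v => hx0 v, fun v => ?_⟩
      have h1 : x v ^ k ≤ 1 := by
        rw [← hx1]
        exact Finset.single_le_sum (f := fun w => x w ^ k)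
          (fun w _ => pow_nonneg (hx0 w) k) (mem_univ v)
      exact (pow_le_one_iff_of_nonneg (hx0 v) hk0).mp h1
    have hcl : IsClosed K := by
      have : K = (⋂ v, {x : V → ℝ | 0 ≤ x v}) ∩ {x | ∑ v, x v ^ k = 1} := by
        ext x; simp [hKdef, Set.mem_iInter]
      rw [this]
      exact ((isClosed_iInter fun v =>
        isClosed_le continuous_const (continuous_apply v))).inter
        (isClosed_eq (continuous_finset_sum _ fun v _ => (continuous_apply v).pow k)
          continuous_const)
    exact IsCompact.of_isClosed_subset isCompact_Icc hcl hsub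
  -- K is nonempty
  obtain ⟨u0⟩ := (inferInstance : Nonempty V)
  have hKne : K.Nonempty := by
    refine ⟨fun v => if v = u0 then 1 else 0, fun v => by dsimp only; split <;> norm_num, ?_⟩
    have : ∀ v : V, (if v = u0 then (1:ℝ) else 0) ^ k = if v = u0 then 1 else 0 := by
      intro v; split <;> simp [zero_pow hk0]
    rw [Finset.sum_congr rfl fun v _ => this v, Finset.sum_ite_eq' univ u0 fun _ => (1:ℝ)]
    simp
  -- maximizer
  obtain ⟨x, hxK, hmax⟩ := hKc.exists_isMaxOn hKne fcont.continuousOn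
  obtain ⟨hx0, hx1⟩ := hxK
  -- key inequality: for every nonnegative y, f y ≤ (f x) * ∑ y^k
  have key : ∀ y : V → ℝ, (∀ v, 0 ≤ y v) → 0 < ∑ v, y v ^ k →
      f y ≤ f x * ∑ v, y v ^ k := by
    intro y hy0 hS
    set S : ℝ := ∑ v, y v ^ k with hSdef
    set c : ℝ := S ^ ((k:ℝ)⁻¹) with hc
    have hcpos : 0 < c := Real.rpow_pos_of_pos hS _
    have hck : c ^ k = S := by
      rw [hc, ← Real.rpow_natCast (S ^ ((k:ℝ)⁻¹)) k, ← Real.rpow_mul hS.le,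
        inv_mul_cancel₀ (ne_of_gt hkR), Real.rpow_one]
    have hz : (fun v => c⁻¹ * y v) ∈ K := by
      refine ⟨fun v => mul_nonneg (inv_nonneg.mpr hcpos.le) (hy0 v), ?_⟩
      have : ∀ v : V, (c⁻¹ * y v) ^ k = c⁻¹ ^ k * y v ^ k := fun v => mul_pow _ _ _
      rw [Finset.sum_congr rfl fun v _ => this v, ← Finset.mul_sum, ← hSdef, ← hck,
        inv_pow, inv_mul_cancel₀ (by positivity)]
    have hle := hmax hz
    rw [Set.mem_setOf_eq, fhom] at hle
    have hcky : c⁻¹ ^ k * f y ≤ f x := hle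
    have hckpos : 0 < c ^ k := by positivity
    calc f y = c ^ k * (c⁻¹ ^ k * f y) := by
                rw [inv_pow]; field_simp
      _ ≤ c ^ k * f x := by
                exact mul_le_mul_of_nonneg_left hcky (le_of_lt hckpos)
      _ = f x * S := by rw [hck, mul_comm]
  -- x ≠ 0
  have hxne : x ≠ 0 := by
    intro h
    rw [h] at hx1
    simp [zero_pow hk0] at hx1
  -- the eigen-equations
  have eig : ∀ v : V, f x * x v ^ (k-1)
      = (d v : ℝ) * x v ^ (k-1) + ∑ e ∈ E.filter (fun e => v ∈ e), ∏ w ∈ e.erase v, x w := by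
    intro v
    set a : ℝ := x v with ha
    set s : ℝ := ∑ e ∈ E.filter (fun e => v ∈ e), ∏ w ∈ e.erase v, x w with hs
    have hs0 : 0 ≤ s :=
      Finset.sum_nonneg fun e he => Finset.prod_nonneg fun w hw => hx0 w
    -- the perturbed sum of k-th powers
    have hSy : ∀ b : ℝ, ∑ w, (Function.update x v b) w ^ k = 1 - a ^ k + b ^ k := by
      intro b
      rw [← Finset.sum_erase_add _ _ (mem_univ v), ← hx1,
        ← Finset.sum_erase_add univ (fun w => x w ^ k) (mem_univ v)]
      have : ∑ w ∈ univ.erase v, (Function.update x v b) w ^ k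
          = ∑ w ∈ univ.erase v, x w ^ k := by
        refine Finset.sum_congr rfl fun w hw => ?_
        rw [Function.update_of_ne (Finset.mem_erase.mp hw).1]
      rw [this, Function.update_self]
      ring
    -- the perturbed value of f
    have hfy : ∀ b : ℝ, f (Function.update x v b)
        = f x + (d v : ℝ) * (b ^ k - a ^ k) + (k:ℝ) * ((b - a) * s) := by
      intro b
      simp only [hf]
      have h1 : ∑ w, (d w : ℝ) * (Function.update x v b) w ^ k
          = (∑ w, (d w : ℝ) * x w ^ k) + (d v:ℝ) * (b ^ k - a ^ k) := by
        rw [← Finset.sum_erase_add _ _ (mem_univ v),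
          ← Finset.sum_erase_add univ (fun w => (d w:ℝ) * x w ^ k) (mem_univ v)]
        have : ∑ w ∈ univ.erase v, (d w : ℝ) * (Function.update x v b) w ^ k
            = ∑ w ∈ univ.erase v, (d w : ℝ) * x w ^ k := by
          refine Finset.sum_congr rfl fun w hw => ?_
          rw [Function.update_of_ne (Finset.mem_erase.mp hw).1]
        rw [this, Function.update_self]
        ring
      have h2 : ∑ e ∈ E, ∏ w ∈ e, (Function.update x v b) w
          = (∑ e ∈ E, ∏ w ∈ e, x w) + (b - a) * s := by
        rw [← Finset.sum_filter_add_sum_filter_not E (fun e => v ∈ e),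
          ← Finset.sum_filter_add_sum_filter_not E (fun e => v ∈ e) (fun e => ∏ w ∈ e, x w)]
        have hnot : ∑ e ∈ E.filter (fun e => ¬ v ∈ e), ∏ w ∈ e, (Function.update x v b) w
            = ∑ e ∈ E.filter (fun e => ¬ v ∈ e), ∏ w ∈ e, x w := by
          refine Finset.sum_congr rfl fun e he => Finset.prod_congr rfl fun w hw => ?_
          have hv : v ∉ e := (Finset.mem_filter.mp he).2
          exact Function.update_of_ne (by rintro rfl; exact hv hw) _ _
        have hyes : ∀ (z : V → ℝ), (∀ w ∈ univ.erase v, z w = x w) →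
            ∑ e ∈ E.filter (fun e => v ∈ e), ∏ w ∈ e, z w = z v * s := by
          intro z hz
          rw [hs, Finset.mul_sum]
          refine Finset.sum_congr rfl fun e he => ?_
          have hv : v ∈ e := (Finset.mem_filter.mp he).2
          rw [← Finset.mul_prod_erase e z hv]
          congr 1
          refine Finset.prod_congr rfl fun w hw => ?_
          exact hz w (Finset.mem_erase_of_ne_of_mem (Finset.mem_erase.mp hw).1 (mem_univ w))
        rw [hnot, hyes (Function.update x v b)
            (fun w hw => Function.update_of_ne (Finset.mem_erase.mp hw).1 _ _),
          hyes x (fun w hw => rfl), Function.update_self]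
        ring
      rw [h1, h2]
      ring
    -- nonnegativity of perturbed vector and positivity of its power sum
    have hak : a ^ k ≤ 1 := by
      rw [← hx1]
      exact Finset.single_le_sum (f := fun w => x w ^ k)
        (fun w _ => pow_nonneg (hx0 w) k) (mem_univ v)
    have hp : ∀ t : ℝ, 0 < a + t →
        0 ≤ (f x - (d v:ℝ)) * ((a+t)^k - a^k) - (k:ℝ) * s * t := by
      intro t ht
      have hy0 : ∀ w, 0 ≤ Function.update x v (a+t) w := by
        intro w
        rcases eq_or_ne w v with rfl | hw
        · rw [Function.update_self]; exact ht.le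
        · rw [Function.update_of_ne hw]; exact hx0 w
      have hSpos : 0 < ∑ w, (Function.update x v (a+t)) w ^ k := by
        rw [hSy]
        have : 0 < (a+t)^k := pow_pos ht k
        nlinarith
      have hkey := key _ hy0 hSpos
      rw [hfy, hSy] at hkey
      nlinarith
    rcases eq_or_lt_of_le (hx0 v) with haz | hapos
    · -- x v = 0 : show s = 0
      have hsz : s ≤ 0 := by
        by_contra hs'
        push_neg at hs'
        set C : ℝ := |f x - (d v:ℝ)| + 1 with hC
        have hCpos : 0 < C := by positivity
        set t : ℝ := min 1 ((k:ℝ) * s / (2 * C)) with htdef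
        have htpos : 0 < t := lt_min one_pos (by positivity)
        have ht1 : t ≤ 1 := min_le_left _ _
        have ht2 : t ≤ (k:ℝ) * s / (2 * C) := min_le_right _ _
        have haz' : a = 0 := haz.symm
        have hpt := hp t (by rw [haz', zero_add]; exact htpos)
        rw [haz'] at hpt
        have h0k : (0:ℝ) ^ k = 0 := zero_pow hk0
        rw [zero_add, h0k, sub_zero] at hpt
        -- hpt : 0 ≤ (f x - d v) * t ^ k - k * s * t
        have htk : t ^ k = t ^ (k-1) * t := by
          conv_lhs => rw [show k = (k-1) + 1 by omega]
          rw [pow_succ]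
        have hks : (k:ℝ) * s ≤ (f x - (d v:ℝ)) * t ^ (k-1) := by
          rw [htk] at hpt
          nlinarith
        have htk1 : t ^ (k-1) ≤ t := by
          calc t ^ (k-1) ≤ t ^ 1 := pow_le_pow_of_le_one htpos.le ht1 (by omega)
            _ = t := pow_one t
        have habs : (f x - (d v:ℝ)) ≤ C := by
          rw [hC]
          have := le_abs_self (f x - (d v:ℝ))
          linarith
        have h1 : (f x - (d v:ℝ)) * t ^ (k-1) ≤ C * t := by
          have htk10 : 0 ≤ t ^ (k-1) := pow_nonneg htpos.le _
          nlinarith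
        have h2 : C * t ≤ (k:ℝ) * s / 2 := by
          have : C * ((k:ℝ) * s / (2 * C)) = (k:ℝ) * s / 2 := by
            field_simp
          nlinarith
        nlinarith
      have hseq : s = 0 := le_antisymm hsz hs0
      have haz' : a = 0 := haz.symm
      rw [haz', hseq, zero_pow hk10]
      ring
    · -- x v > 0 : use differentiability at interior point
      set p : ℝ → ℝ := fun t => (f x - (d v:ℝ)) * ((a+t)^k - a^k) - (k:ℝ) * s * t with hpdef
      have hmin : IsLocalMin p 0 := by
        have hev : ∀ᶠ t in nhds (0:ℝ), 0 < a + t := by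
          have hcont : Continuous fun t : ℝ => a + t := continuous_const.add continuous_id
          have : (fun t : ℝ => a + t) ⁻¹' Set.Ioi 0 ∈ nhds (0:ℝ) :=
            (isOpen_Ioi.preimage hcont).mem_nhds (by simpa using hapos)
          exact Filter.eventually_of_mem this fun t ht => ht
        filter_upwards [hev] with t ht
        have := hp t ht
        simp only [hpdef]
        simp only [add_zero, sub_self, mul_zero, sub_zero]
        linarith
      have hder : HasDerivAt p ((f x - (d v:ℝ)) * ((k:ℝ) * a ^ (k-1)) - (k:ℝ) * s) 0 := by
        have h1 : HasDerivAt (fun t : ℝ => a + t) 1 0 := (hasDerivAt_id 0).const_add a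
        have h2 : HasDerivAt (fun t : ℝ => (a + t)^k) ((k:ℝ) * (a + 0) ^ (k-1) * 1) 0 :=
          h1.pow k
        rw [add_zero, mul_one] at h2
        have h3 := ((h2.sub_const (a^k)).const_mul (f x - (d v:ℝ))).sub
          (((hasDerivAt_id 0)).const_mul ((k:ℝ) * s))
        simp only [mul_one] at h3
        exact h3
      have hz := hmin.deriv_eq_zero
      rw [hder.deriv] at hz
      have h5 : (k:ℝ) * (f x * a ^ (k-1) - ((d v:ℝ) * a ^ (k-1) + s)) = 0 := by
        linear_combination hz
      rcases mul_eq_zero.mp h5 with h | h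
      · exact absurd h (ne_of_gt hkR)
      · linarith
  -- the maximum degree bound
  have hdapp : ∀ v : V, d v = (E.filter (fun e => v ∈ e)).card := fun v => by rw [hd]
  clear_value d f K
  refine ⟨f x, x, hxne, ?_, ?_⟩
  · intro v
    have := eig v
    simpa [hd] using this
  · -- strict inequality with the max degree
    obtain ⟨u, -, hu⟩ := Finset.exists_mem_eq_sup' (univ_nonempty (α := V)) d
    rw [hu]
    -- Δ = d u ≥ 1
    obtain ⟨e1, he1⟩ := hE
    have hcard1 : e1.card = k := hunif e1 he1
    obtain ⟨v1, hv1⟩ := Finset.card_pos.mp (by omega : 0 < e1.card)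
    have hd1 : 1 ≤ d v1 := by
      rw [hdapp v1]
      exact Finset.card_pos.mpr ⟨e1, Finset.mem_filter.mpr ⟨he1, hv1⟩⟩
    have hdu : d v1 ≤ d u := hu ▸ Finset.le_sup' d (mem_univ v1)
    have hdu1 : 1 ≤ d u := le_trans hd1 hdu
    have hduR : (1:ℝ) ≤ (d u : ℝ) := by exact_mod_cast hdu1
    -- an edge through u
    obtain ⟨e0, he0'⟩ := Finset.card_pos.mp (by rw [← hdapp u]; exact hdu1)
    have he0E : e0 ∈ E := (Finset.mem_filter.mp he0').1
    have hue0 : u ∈ e0 := (Finset.mem_filter.mp he0').2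
    have he0card : e0.card = k := hunif e0 he0E
    -- the test vector
    set b : ℝ := 1 / ((k:ℝ) * (d u : ℝ)) with hb
    have hdupos : (0:ℝ) < (d u : ℝ) := lt_of_lt_of_le one_pos hduR
    have hbpos : 0 < b := by rw [hb]; exact div_pos one_pos (mul_pos hkR hdupos)
    set y : V → ℝ := fun w => if w = u then 1 else if w ∈ e0 then b else 0 with hy
    clear_value b
    clear_value y
    have hy0 : ∀ w, 0 ≤ y w := by
      intro w; rw [hy]; dsimp only; split
      · exact zero_le_one
      · split
        · exact hbpos.le
        · exact le_rfl
    -- sum of k-th powers of y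
    have hyS : ∑ w, y w ^ k = 1 + ((k:ℝ) - 1) * b ^ k := by
      have hz : ∀ w ∈ univ, w ∉ e0 → y w ^ k = 0 := by
        intro w _ hw
        have hwu : w ≠ u := fun h => hw (h ▸ hue0)
        rw [hy]; dsimp only
        rw [if_neg hwu, if_neg hw, zero_pow hk0]
      rw [← Finset.sum_subset (Finset.subset_univ e0) hz,
        ← Finset.sum_erase_add e0 _ hue0]
      have h1 : ∑ w ∈ e0.erase u, y w ^ k = ((k:ℝ) - 1) * b ^ k := by
        have : ∀ w ∈ e0.erase u, y w ^ k = b ^ k := by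
          intro w hw
          obtain ⟨hwu, hwe⟩ := Finset.mem_erase.mp hw
          rw [hy]; dsimp only; rw [if_neg hwu, if_pos hwe]
        rw [Finset.sum_congr rfl this, Finset.sum_const, Finset.card_erase_of_mem hue0,
          he0card, nsmul_eq_mul]
        congr 1
        push_cast [Nat.cast_sub (by omega : 1 ≤ k)]
        ring
      have h2 : y u = 1 := by rw [hy]; dsimp only; rw [if_pos rfl]
      rw [h1, h2, one_pow]
      ring
    have h2kR : (2:ℝ) ≤ (k:ℝ) := by exact_mod_cast hk
    have hk1R : (0:ℝ) ≤ (k:ℝ) - 1 := by linarith only [h2kR]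
    have hySpos : 0 < ∑ w, y w ^ k := by
      rw [hyS]
      have h := mul_nonneg hk1R (pow_pos hbpos k).le
      linarith only [h]
    -- lower bound on f y
    have hprod : ∏ w ∈ e0, y w = b ^ (k-1) := by
      rw [← Finset.mul_prod_erase e0 y hue0]
      have h2 : y u = 1 := by rw [hy]; dsimp only; rw [if_pos rfl]
      have : ∀ w ∈ e0.erase u, y w = b := by
        intro w hw
        obtain ⟨hwu, hwe⟩ := Finset.mem_erase.mp hw
        rw [hy]; dsimp only; rw [if_neg hwu, if_pos hwe]
      rw [h2, Finset.prod_congr rfl this, Finset.prod_const,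
        Finset.card_erase_of_mem hue0, he0card, one_mul]
    have hfylb : (d u : ℝ) + (k:ℝ) * b ^ (k-1) ≤ f y := by
      simp only [hf]
      have h1 : (d u : ℝ) ≤ ∑ w, (d w : ℝ) * y w ^ k := by
        have hle : (d u : ℝ) * y u ^ k ≤ ∑ w, (d w : ℝ) * y w ^ k :=
          Finset.single_le_sum (f := fun w => (d w : ℝ) * y w ^ k)
            (fun w _ => mul_nonneg (by positivity) (pow_nonneg (hy0 w) k)) (mem_univ u)
        have h2 : y u = 1 := by rw [hy]; dsimp only; rw [if_pos rfl]
        rw [h2, one_pow, mul_one] at hle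
        exact hle
      have h2 : b ^ (k-1) ≤ ∑ e ∈ E, ∏ w ∈ e, y w := by
        have hle : ∏ w ∈ e0, y w ≤ ∑ e ∈ E, ∏ w ∈ e, y w :=
          Finset.single_le_sum (f := fun e => ∏ w ∈ e, y w)
            (fun e _ => Finset.prod_nonneg fun w _ => hy0 w) he0E
        rwa [hprod] at hle
      nlinarith [hkR]
    -- conclude
    have hkey := key y hy0 hySpos
    rw [hyS] at hkey
    -- d u * (1 + (k-1) b^k) < d u + k * b^(k-1)
    have hbk : b ^ k = b ^ (k-1) * b := by
      conv_lhs => rw [show k = (k-1) + 1 by omega]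
      rw [pow_succ]
    have hdub : (d u : ℝ) * b * (k:ℝ) = 1 := by
      rw [hb]; field_simp
    have hbk1pos : 0 < b ^ (k-1) := pow_pos hbpos _
    have hstep : (d u : ℝ) * (1 + ((k:ℝ) - 1) * b ^ k) < (d u : ℝ) + (k:ℝ) * b ^ (k-1) := by
      have h1 : (d u : ℝ) * (((k:ℝ) - 1) * b ^ k) < (k:ℝ) * b ^ (k-1) := by
        rw [hbk]
        have hdb : (d u : ℝ) * b = 1 / (k:ℝ) := by
          rw [eq_div_iff (ne_of_gt hkR)]; linarith [hdub]
        have : (d u : ℝ) * (((k:ℝ) - 1) * (b ^ (k-1) * b))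
            = ((k:ℝ) - 1) / (k:ℝ) * b ^ (k-1) := by
          linear_combination (((k:ℝ) - 1) * b ^ (k-1)) * hdb
        rw [this]
        have hfrac : ((k:ℝ) - 1) / (k:ℝ) < (k:ℝ) := by
          rw [div_lt_iff₀ hkR]
          nlinarith [hkR]
        nlinarith
      nlinarith
    have hSpos' : 0 < 1 + ((k:ℝ) - 1) * b ^ k := by
      have : 0 < b ^ k := pow_pos hbpos k
      nlinarith [hkR]
    have : (d u : ℝ) * (1 + ((k:ℝ) - 1) * b ^ k) < f x * (1 + ((k:ℝ) - 1) * b ^ k) := by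
      calc (d u : ℝ) * (1 + ((k:ℝ) - 1) * b ^ k) < (d u : ℝ) + (k:ℝ) * b ^ (k-1) := hstep
        _ ≤ f y := hfylb
        _ ≤ f x * (1 + ((k:ℝ) - 1) * b ^ k) := hkey
    have := lt_of_mul_lt_mul_left (by
      rw [mul_comm (d u : ℝ), mul_comm (f x)] at this; exact this) hSpos'.le
    simpa [hd] using this
end

section
/- Let G be a finite simple graph and let k ≥ 4 be an even integer. Then the generalized power hypergraph G^{k,k/2} is odd-bipartite if and only if G is bipartite. -/
open Finset

/-- The edge set of the generalized power hypergraph `G^{k, k/2}` (with `s = k/2`):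
each edge `{u,v}` of `G` is blown up into the `2s`-set `({u} × Fin s) ∪ ({v} × Fin s)`. -/
def powerEdges {V : Type*} [Fintype V] [DecidableEq V] (G : SimpleGraph V)
    [DecidableRel G.Adj] (s : ℕ) : Finset (Finset (V × Fin s)) :=
  (Finset.univ.filter fun p : V × V => G.Adj p.1 p.2).image
    (fun p => ({p.1} ×ˢ (Finset.univ : Finset (Fin s)))
        ∪ ({p.2} ×ˢ (Finset.univ : Finset (Fin s))))

/-- `lam` is an adjacency H-eigenvalue of the generalized power hypergraph `G^{k,s}`
(`k = 2s`) with H-eigenvector `x`. -/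
def IsAdjHEigPow {V : Type*} [Fintype V] [DecidableEq V] (G : SimpleGraph V)
    [DecidableRel G.Adj] (k s : ℕ) (lam : ℝ) (x : V × Fin s → ℝ) : Prop :=
  x ≠ 0 ∧ ∀ p : V × Fin s,
    lam * x p ^ (k - 1)
      = ∑ e ∈ (powerEdges G s).filter (fun e => p ∈ e), ∏ w ∈ e.erase p, x w

/-- `lam` is a signless Laplacian H-eigenvalue of the generalized power hypergraph
`G^{k,s}` (`k = 2s`) with H-eigenvector `x`. -/
def IsQHEigPow {V : Type*} [Fintype V] [DecidableEq V] (G : SimpleGraph V)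
    [DecidableRel G.Adj] (k s : ℕ) (lam : ℝ) (x : V × Fin s → ℝ) : Prop :=
  x ≠ 0 ∧ ∀ p : V × Fin s,
    lam * x p ^ (k - 1)
      = (((powerEdges G s).filter (fun e => p ∈ e)).card : ℝ) * x p ^ (k - 1)
        + ∑ e ∈ (powerEdges G s).filter (fun e => p ∈ e), ∏ w ∈ e.erase p, x w

/-- for a finite simple graph `G` and even `k ≥ 4` with `s = k/2`, the
generalized power hypergraph `G^{k,k/2}` is odd-bipartite iff `G` is bipartite. -/
theorem stmt5 {V : Type*} [Fintype V] [DecidableEq V] (G : SimpleGraph V)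
    [DecidableRel G.Adj] (k s : ℕ) (hk : 4 ≤ k) (hks : k = 2 * s) :
    (∃ V₁ : Finset (V × Fin s), ∀ e ∈ powerEdges G s, Odd ((e ∩ V₁).card)) ↔
    (∃ A : Set V, ∀ u v : V, G.Adj u v → (u ∈ A ↔ v ∉ A)) := by
  classical
  have hs : 1 ≤ s := by omega
  have hmem : ∀ u v : V, G.Adj u v →
      (({u} ×ˢ (Finset.univ : Finset (Fin s))) ∪ ({v} ×ˢ Finset.univ))
        ∈ powerEdges G s := by
    intro u v huv
    simp only [powerEdges, Finset.mem_image, Finset.mem_filter, Finset.mem_univ, true_and,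
      Prod.exists]
    exact ⟨u, v, huv, rfl⟩
  have hcard : ∀ (u v : V), u ≠ v → ∀ V₁ : Finset (V × Fin s),
      (((({u} ×ˢ (Finset.univ : Finset (Fin s))) ∪ ({v} ×ˢ Finset.univ)) ∩ V₁).card)
        = ((({u} ×ˢ (Finset.univ : Finset (Fin s))) ∩ V₁).card)
          + ((({v} ×ˢ (Finset.univ : Finset (Fin s))) ∩ V₁).card) := by
    intro u v huv V₁
    rw [Finset.union_inter_distrib_right, Finset.card_union_of_disjoint]
    refine Finset.disjoint_left.2 ?_
    rintro ⟨w, i⟩ hw hv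
    simp only [Finset.mem_inter, Finset.mem_product, Finset.mem_singleton] at hw hv
    exact huv (hw.1.1.symm.trans hv.1.1)
  constructor
  · rintro ⟨V₁, hV₁⟩
    refine ⟨{u | Odd ((({u} ×ˢ (Finset.univ : Finset (Fin s))) ∩ V₁).card)}, ?_⟩
    intro u v huv
    have h := hV₁ _ (hmem u v huv)
    rw [hcard u v huv.ne V₁] at h
    simp only [Set.mem_setOf_eq, Nat.odd_iff] at h ⊢
    rw [Nat.add_mod] at h
    omega
  · rintro ⟨A, hA⟩
    refine ⟨Finset.univ.filter (fun p => p.1 ∈ A ∧ p.2 = ⟨0, hs⟩), ?_⟩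
    intro e he
    simp only [powerEdges, Finset.mem_image, Finset.mem_filter, Finset.mem_univ, true_and,
      Prod.exists] at he
    obtain ⟨u, v, huv, rfl⟩ := he
    rw [hcard u v huv.ne]
    have key : ∀ w : V,
        ((({w} ×ˢ (Finset.univ : Finset (Fin s))) ∩
          Finset.univ.filter (fun p : V × Fin s => p.1 ∈ A ∧ p.2 = ⟨0, hs⟩)).card)
          = if w ∈ A then 1 else 0 := by
      intro w
      split_ifs with hw
      · rw [Finset.card_eq_one]
        refine ⟨(w, ⟨0, hs⟩), ?_⟩
        ext ⟨a, i⟩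
        simp only [Finset.mem_inter, Finset.mem_product, Finset.mem_singleton,
          Finset.mem_filter, Finset.mem_univ, true_and, Prod.mk.injEq]
        constructor
        · rintro ⟨⟨rfl, -⟩, -, hi⟩; exact ⟨rfl, hi⟩
        · rintro ⟨rfl, rfl⟩; exact ⟨⟨rfl, trivial⟩, hw, rfl⟩
      · rw [Finset.card_eq_zero]
        ext ⟨a, i⟩
        simp only [Finset.mem_inter, Finset.mem_product, Finset.mem_singleton,
          Finset.mem_filter, Finset.mem_univ, true_and, Finset.notMem_empty, iff_false]
        rintro ⟨⟨rfl, -⟩, ha, -⟩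
        exact hw ha
    rw [key u, key v]
    have := hA u v huv
    by_cases hu : u ∈ A
    · simp [hu, (this.mp hu)]
    · have hv : v ∈ A := by by_contra hv; exact hu (this.mpr hv)
      simp [hu, hv]
end

section
/- Let G be a finite simple graph, let k ≥ 4 be an even integer with s = k/2, and suppose λ ≠ 0 is an adjacency H-eigenvalue of the generalized power hypergraph G^{k,k/2} with H-eigenvector x : V(G) × {1,…,s} → ℝ. Then for every v ∈ V(G) and all i, j ∈ {1,…,s}, x_{(v,i)}^k = x_{(v,j)}^k, and hence |x_{(v,i)}| = |x_{(v,j)}|. -/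
open Finset

/-- Membership of `(v,i)` in an edge of `powerEdges` does not depend on `i`. -/
lemma powerEdges_mem_indep {V : Type*} [Fintype V] [DecidableEq V] (G : SimpleGraph V)
    [DecidableRel G.Adj] (s : ℕ) {e : Finset (V × Fin s)} (he : e ∈ powerEdges G s)
    (v : V) (i j : Fin s) : (v, i) ∈ e ↔ (v, j) ∈ e := by
  simp only [powerEdges, Finset.mem_image, Finset.mem_filter] at he
  obtain ⟨p, -, rfl⟩ := he
  simp [Finset.mem_union, Finset.mem_product]

/-- if `λ ≠ 0` is an adjacency H-eigenvalue of `G^{k,k/2}` with H-eigenvector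
`x`, then within each half edge `{v} × Fin s` the entries of `x` have equal `k`-th powers,
hence equal absolute values. -/
theorem stmt6 {V : Type*} [Fintype V] [DecidableEq V] (G : SimpleGraph V)
    [DecidableRel G.Adj] (k s : ℕ) (hk : 4 ≤ k) (hks : k = 2 * s)
    (lam : ℝ) (x : V × Fin s → ℝ) (hlam : lam ≠ 0)
    (heig : IsAdjHEigPow G k s lam x) (v : V) (i j : Fin s) :
    x (v, i) ^ k = x (v, j) ^ k ∧ |x (v, i)| = |x (v, j)| := by
  obtain ⟨-, hx⟩ := heig
  have key : ∀ i : Fin s, lam * x (v, i) ^ k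
      = ∑ e ∈ (powerEdges G s).filter (fun e => (v, i) ∈ e), ∏ w ∈ e, x w := by
    intro i
    have h1 : x (v, i) ^ k = x (v, i) * x (v, i) ^ (k - 1) := by
      rw [← pow_succ']
      congr 1
      omega
    rw [h1, mul_left_comm, hx (v, i), Finset.mul_sum]
    refine Finset.sum_congr rfl fun e he => ?_
    rw [Finset.mem_filter] at he
    exact Finset.mul_prod_erase _ _ he.2
  have hsets : (powerEdges G s).filter (fun e => (v, i) ∈ e)
      = (powerEdges G s).filter (fun e => (v, j) ∈ e) := by
    apply Finset.filter_congr
    intro e he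
    simpa using powerEdges_mem_indep G s he v i j
  have hpow : x (v, i) ^ k = x (v, j) ^ k := by
    have h2 : lam * x (v, i) ^ k = lam * x (v, j) ^ k := by
      rw [key i, key j, hsets]
    exact mul_left_cancel₀ hlam h2
  refine ⟨hpow, ?_⟩
  have hkeven : Even k := ⟨s, by omega⟩
  have habs : |x (v, i)| ^ k = |x (v, j)| ^ k := by
    rw [hkeven.pow_abs, hkeven.pow_abs, hpow]
  exact le_antisymm (le_of_pow_le_pow_left₀ (by omega) (abs_nonneg _) habs.le)
    (le_of_pow_le_pow_left₀ (by omega) (abs_nonneg _) habs.ge)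
end

section
/- Let G be a finite simple graph, let k ≥ 4 be an even integer with s = k/2, let v ∈ V(G), and suppose λ is a signless Laplacian H-eigenvalue of the generalized power hypergraph G^{k,k/2} with H-eigenvector x : V(G) × {1,…,s} → ℝ, where λ ≠ deg_G(v). Then for all i, j ∈ {1,…,s}, x_{(v,i)}^k = x_{(v,j)}^k, and hence |x_{(v,i)}| = |x_{(v,j)}|. -/
open Finset

/-- if `λ` is a signless Laplacian H-eigenvalue of `G^{k,k/2}` with
H-eigenvector `x` and `λ ≠ deg_G(v)`, then within the half edge `{v} × Fin s` the entries
of `x` have equal `k`-th powers, hence equal absolute values. -/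
theorem stmt7 {V : Type*} [Fintype V] [DecidableEq V] (G : SimpleGraph V)
    [DecidableRel G.Adj] (k s : ℕ) (hk : 4 ≤ k) (hks : k = 2 * s)
    (v : V) (lam : ℝ) (x : V × Fin s → ℝ) (hlam : lam ≠ (G.degree v : ℝ))
    (heig : IsQHEigPow G k s lam x) (i j : Fin s) :
    x (v, i) ^ k = x (v, j) ^ k ∧ |x (v, i)| = |x (v, j)| := by
  obtain ⟨hx0, heq⟩ := heig
  have hs : 2 ≤ s := by omega
  have hk1 : k - 1 + 1 = k := by omega
  set E : V → Finset (V × Fin s) := fun u =>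
    ({v} ×ˢ (Finset.univ : Finset (Fin s))) ∪ ({u} ×ˢ (Finset.univ : Finset (Fin s))) with hE
  -- filter characterization
  have hfil : ∀ i : Fin s, (powerEdges G s).filter (fun e => (v, i) ∈ e)
      = (G.neighborFinset v).image E := by
    intro i
    ext e
    simp only [powerEdges, mem_filter, mem_image, mem_filter, Finset.mem_univ, true_and,
      SimpleGraph.mem_neighborFinset, hE]
    constructor
    · rintro ⟨⟨p, hadj, rfl⟩, hmem⟩
      simp only [Finset.mem_union, Finset.mem_product, Finset.mem_singleton,
        Finset.mem_univ, and_true] at hmem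
      rcases hmem with h1 | h2
      · exact ⟨p.2, h1 ▸ hadj, by rw [h1]⟩
      · exact ⟨p.1, h2 ▸ hadj.symm, by rw [h2, Finset.union_comm]⟩
    · rintro ⟨u, hadj, rfl⟩
      refine ⟨⟨(v, u), hadj, rfl⟩, ?_⟩
      simp
  have hinj : Set.InjOn E (G.neighborFinset v : Set V) := by
    intro u hu u' hu' hEq
    simp only [coe_mem, Set.mem_setOf_eq, mem_coe, SimpleGraph.mem_neighborFinset] at hu hu'
    have h0 : (u, i) ∈ E u := by simp [hE]
    rw [hEq] at h0
    simp only [hE, Finset.mem_union, Finset.mem_product, Finset.mem_singleton,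
      Finset.mem_univ, and_true] at h0
    rcases h0 with h | h
    · exact absurd h hu.ne'
    · exact h
  have hcard : ∀ i : Fin s,
      (((powerEdges G s).filter (fun e => (v, i) ∈ e)).card : ℝ) = (G.degree v : ℝ) := by
    intro i
    rw [hfil i, Finset.card_image_of_injOn hinj, SimpleGraph.card_neighborFinset_eq_degree]
  -- product over erased edge
  have hprod : ∀ (u : V), G.Adj v u → ∀ i : Fin s,
      ∏ w ∈ (E u).erase (v, i), x w
        = (∏ l ∈ Finset.univ.erase i, x (v, l)) * ∏ l, x (u, l) := by
    intro u hadj i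
    have hne : u ≠ v := hadj.ne'
    have hset : (E u).erase (v, i)
        = ({v} ×ˢ (Finset.univ.erase i)) ∪ ({u} ×ˢ (Finset.univ : Finset (Fin s))) := by
      ext ⟨a, b⟩
      simp only [hE, Finset.mem_erase, Finset.mem_union, Finset.mem_product,
        Finset.mem_singleton, Finset.mem_univ, and_true, ne_eq, Prod.mk.injEq, not_and]
      constructor
      · rintro ⟨hne2, h | h⟩
        · exact Or.inl ⟨h, hne2 h⟩
        · exact Or.inr h
      · rintro (⟨ha, hb⟩ | h)
        · exact ⟨fun _ => hb, Or.inl ha⟩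
        · exact ⟨fun ha' => (hne (ha'.symm.trans h).symm).elim, Or.inr h⟩
    rw [hset, Finset.prod_union, Finset.prod_product, Finset.prod_product,
      Finset.prod_singleton, Finset.prod_singleton]
    · rw [Finset.disjoint_left]
      rintro ⟨a, b⟩ ha hb
      simp only [Finset.mem_product, Finset.mem_singleton] at ha hb
      exact hne (hb.1 ▸ ha.1 ▸ rfl)
  -- key identity
  set S : ℝ := ∑ u ∈ G.neighborFinset v, ∏ l, x (u, l) with hS
  have key : ∀ i : Fin s,
      (lam - (G.degree v : ℝ)) * x (v, i) ^ k = (∏ l, x (v, l)) * S := by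
    intro i
    have h := heq (v, i)
    rw [hcard i, hfil i, Finset.sum_image (fun a ha b hb => hinj ha hb)] at h
    have h2 : ∀ u ∈ G.neighborFinset v,
        ∏ w ∈ (E u).erase (v, i), x w
          = (∏ l ∈ Finset.univ.erase i, x (v, l)) * ∏ l, x (u, l) := by
      intro u hu
      exact hprod u (by simpa using hu) i
    rw [Finset.sum_congr rfl h2, ← Finset.mul_sum, ← hS] at h
    have h3 : (lam - (G.degree v : ℝ)) * x (v, i) ^ (k - 1)
        = (∏ l ∈ Finset.univ.erase i, x (v, l)) * S := by linarith
    have h4 := congrArg (· * x (v, i)) h3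
    calc (lam - (G.degree v : ℝ)) * x (v, i) ^ k
        = (lam - (G.degree v : ℝ)) * x (v, i) ^ (k - 1) * x (v, i) := by
          rw [mul_assoc, ← pow_succ, hk1]
      _ = (∏ l ∈ Finset.univ.erase i, x (v, l)) * S * x (v, i) := h4
      _ = (∏ l, x (v, l)) * S := by
          rw [mul_right_comm, mul_comm (∏ l ∈ Finset.univ.erase i, x (v, l)) (x (v, i)),
            Finset.mul_prod_erase Finset.univ (fun l => x (v, l)) (Finset.mem_univ i)]
  have hne0 : lam - (G.degree v : ℝ) ≠ 0 := sub_ne_zero.mpr hlam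
  have hpow : x (v, i) ^ k = x (v, j) ^ k :=
    mul_left_cancel₀ hne0 ((key i).trans (key j).symm)
  refine ⟨hpow, ?_⟩
  have hkne : k ≠ 0 := by omega
  have habs : |x (v, i)| ^ k = |x (v, j)| ^ k := by
    rw [← abs_pow, ← abs_pow, hpow]
  exact (pow_left_inj₀ (abs_nonneg _) (abs_nonneg _) hkne).mp habs
end

section
/- Let G be a finite simple graph, let k ≥ 4 be an even integer with s = k/2, and suppose λ ≠ 0 is an adjacency H-eigenvalue of the generalized power hypergraph G^{k,k/2} with H-eigenvector x. Let U = {v ∈ V(G) : x_{(v,i)} ≠ 0 for some i ∈ {1,…,s}}. Then every vertex of U has a neighbor in U in the graph G; that is, the induced subgraph G[U] contains no isolated vertices. -/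
open Finset

/-- if `λ ≠ 0` is an adjacency H-eigenvalue of `G^{k,k/2}` with H-eigenvector
`x` and `U = {v : x is nonzero somewhere on the half edge of v}`, then every vertex of `U`
has a neighbor in `U`, i.e. `G[U]` has no isolated vertices. -/
theorem stmt8 {V : Type*} [Fintype V] [DecidableEq V] (G : SimpleGraph V)
    [DecidableRel G.Adj] (k s : ℕ) (hk : 4 ≤ k) (hks : k = 2 * s)
    (lam : ℝ) (x : V × Fin s → ℝ) (hlam : lam ≠ 0)
    (heig : IsAdjHEigPow G k s lam x) :
    ∀ v : V, (∃ i : Fin s, x (v, i) ≠ 0) →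
      ∃ u : V, G.Adj v u ∧ ∃ i : Fin s, x (u, i) ≠ 0 := by
  intro v ⟨i, hxi⟩
  have heq := heig.2 (v, i)
  have hne : lam * x (v, i) ^ (k - 1) ≠ 0 := mul_ne_zero hlam (pow_ne_zero _ hxi)
  rw [heq] at hne
  obtain ⟨e, he, hprod⟩ := Finset.exists_ne_zero_of_sum_ne_zero hne
  rw [Finset.mem_filter] at he
  obtain ⟨hepow, hpe⟩ := he
  simp only [powerEdges, Finset.mem_image, Finset.mem_filter] at hepow
  obtain ⟨⟨a, b⟩, ⟨-, hadj⟩, rfl⟩ := hepow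
  have hfac : ∀ w ∈ (({a} ×ˢ (Finset.univ : Finset (Fin s))) ∪
      ({b} ×ˢ (Finset.univ : Finset (Fin s)))).erase (v, i), x w ≠ 0 :=
    Finset.prod_ne_zero_iff.mp hprod
  simp only [Finset.mem_union, Finset.mem_product, Finset.mem_singleton,
    Finset.mem_univ, and_true] at hpe
  rcases hpe with rfl | rfl
  · refine ⟨b, hadj, i, hfac _ ?_⟩
    rw [Finset.mem_erase]
    constructor
    · simp [Prod.ext_iff, hadj.symm.ne]
    · simp
  · refine ⟨a, hadj.symm, i, hfac _ ?_⟩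
    rw [Finset.mem_erase]
    constructor
    · simp [Prod.ext_iff, hadj.ne]
    · simp
end

section
/- Let G be a finite simple graph, let k ≥ 4 be an even integer with s = k/2, and suppose λ ≠ 0 is an adjacency H-eigenvalue of the generalized power hypergraph G^{k,k/2} with H-eigenvector x. Let U = {v ∈ V(G) : x_{(v,i)} ≠ 0 for some i ∈ {1,…,s}}. Then the vector y : U → ℝ defined by y_u = Π_{i=1}^{s} x_{(u,i)} is nonzero and satisfies A(G[U]) y = λ y; in particular, λ is an eigenvalue of the adjacency matrix of the induced subgraph G[U]. -/
open Finset

open scoped Classical in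
/-- if `λ ≠ 0` is an adjacency H-eigenvalue of `G^{k,k/2}` with H-eigenvector
`x` and `U = {v : x is nonzero somewhere on the half edge of v}`, then the vector
`y_u = Π_i x_{(u,i)}` on `U` is nonzero and is an eigenvector of the adjacency matrix of
the induced subgraph `G[U]` for the eigenvalue `λ`. -/
theorem stmt9 {V : Type*} [Fintype V] [DecidableEq V] (G : SimpleGraph V)
    [DecidableRel G.Adj] (k s : ℕ) (hk : 4 ≤ k) (hks : k = 2 * s)
    (lam : ℝ) (x : V × Fin s → ℝ) (hlam : lam ≠ 0)
    (heig : IsAdjHEigPow G k s lam x)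
    (U : Set V) (hU : U = {v : V | ∃ i : Fin s, x (v, i) ≠ 0})
    (y : U → ℝ) (hy : ∀ u : U, y u = ∏ i : Fin s, x (u.1, i)) :
    y ≠ 0 ∧
      (Matrix.of fun u w : U => if G.Adj u.1 w.1 then (1 : ℝ) else 0).mulVec y
        = lam • y := by
  classical
  obtain ⟨hx, hEig⟩ := heig
  have hs0 : 0 < s := by omega
  have hk0 : k ≠ 0 := by omega
  set He : V → Finset (V × Fin s) := fun a => {a} ×ˢ (univ : Finset (Fin s)) with hHe
  set Y : V → ℝ := fun v => ∏ i : Fin s, x (v, i) with hYdef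
  set S : V → ℝ := fun v => ∑ u ∈ univ.filter (fun u => G.Adj v u), Y u with hSdef
  have hmemHe : ∀ (a : V) (q : V × Fin s), q ∈ He a ↔ q.1 = a := by
    intro a q
    simp only [hHe, Finset.mem_product, Finset.mem_singleton, Finset.mem_univ, and_true]
  -- the filter of edges containing (v, i)
  have hfilter : ∀ (v : V) (i : Fin s),
      (powerEdges G s).filter (fun e => (v, i) ∈ e)
        = (univ.filter (fun u => G.Adj v u)).image (fun u => He v ∪ He u) := by
    intro v i
    ext e
    simp only [mem_filter, mem_image, powerEdges, mem_image, mem_filter, mem_univ, true_and]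
    constructor
    · rintro ⟨⟨⟨a, b⟩, hab, rfl⟩, hmem⟩
      rcases Finset.mem_union.1 hmem with h | h
      · have hva : v = a := (hmemHe a _).1 h
        exact ⟨b, by simpa [← hva] using hab, by rw [hva]⟩
      · have hvb : v = b := (hmemHe b _).1 h
        exact ⟨a, by simpa [← hvb] using hab.symm, by rw [hvb, Finset.union_comm]⟩
    · rintro ⟨u, hadj, rfl⟩
      refine ⟨⟨(v, u), hadj, rfl⟩, Finset.mem_union_left _ ?_⟩
      exact (hmemHe v (v, i)).2 rfl
  -- injectivity of u ↦ He v ∪ He u on neighbors of v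
  have hinj : ∀ v : V, Set.InjOn (fun u => He v ∪ He u)
      (univ.filter (fun u => G.Adj v u)) := by
    intro v u hu u' hu' h
    simp only [coe_filter, Set.mem_setOf_eq, mem_univ, true_and] at hu hu'
    replace h : He v ∪ He u = He v ∪ He u' := h
    have h1 : (u, (⟨0, hs0⟩ : Fin s)) ∈ He v ∪ He u := by
      exact Finset.mem_union_right _ ((hmemHe u _).2 rfl)
    rw [h] at h1
    rcases Finset.mem_union.1 h1 with h2 | h2
    · exact absurd ((hmemHe v _).1 h2) (G.ne_of_adj hu).symm
    · exact (hmemHe u' _).1 h2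
  -- product over an erased edge
  have hprod : ∀ (v u : V) (i : Fin s), v ≠ u →
      ∏ w ∈ (He v ∪ He u).erase (v, i), x w
        = (∏ j ∈ univ.erase i, x (v, j)) * Y u := by
    intro v u i hvu
    have h1 : (He v ∪ He u).erase (v, i) = ({v} ×ˢ (univ.erase i)) ∪ He u := by
      ext ⟨a, j⟩
      simp only [Finset.mem_erase, Finset.mem_union, hHe, Finset.mem_product,
        Finset.mem_singleton, Finset.mem_univ, and_true, Prod.mk.injEq, not_and, Ne]
      constructor
      · rintro ⟨hne, ha | ha⟩
        · exact Or.inl ⟨ha, hne ha⟩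
        · exact Or.inr ha
      · rintro (⟨ha, hj⟩ | ha)
        · exact ⟨fun _ => hj, Or.inl ha⟩
        · exact ⟨fun hav _ => hvu (hav.symm.trans ha), Or.inr ha⟩
    have hdisj : Disjoint ({v} ×ˢ (univ.erase i)) (He u) := by
      rw [Finset.disjoint_left]
      rintro ⟨a, j⟩ h1 h2
      have := (hmemHe u (a, j)).1 h2
      simp only [Finset.mem_product, Finset.mem_singleton] at h1
      exact hvu (h1.1.symm.trans this)
    rw [h1, Finset.prod_union hdisj]
    congr 1
    · rw [Finset.singleton_product, Finset.prod_map]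
      rfl
    · show ∏ w ∈ {u} ×ˢ (univ : Finset (Fin s)), x w = Y u
      rw [Finset.singleton_product, Finset.prod_map]
      rfl
  -- the key scalar equation: lam * x(v,i)^k = Y v * S v
  have hkey : ∀ (v : V) (i : Fin s), lam * x (v, i) ^ k = Y v * S v := by
    intro v i
    have h := hEig (v, i)
    rw [hfilter v i, Finset.sum_image (fun a ha b hb hab => hinj v ha hb hab)] at h
    have h2 : ∀ u ∈ univ.filter (fun u => G.Adj v u),
        ∏ w ∈ (He v ∪ He u).erase (v, i), x w
          = (∏ j ∈ univ.erase i, x (v, j)) * Y u := by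
      intro u hu
      exact hprod v u i (G.ne_of_adj (by simpa using hu))
    rw [Finset.sum_congr rfl h2, ← Finset.mul_sum] at h
    have h3 : x (v, i) * (lam * x (v, i) ^ (k - 1))
        = x (v, i) * ((∏ j ∈ univ.erase i, x (v, j)) * S v) := by rw [h]
    calc lam * x (v, i) ^ k = x (v, i) * (lam * x (v, i) ^ (k - 1)) := by
          rw [← mul_assoc, mul_comm (x (v,i)) lam, mul_assoc, ← pow_succ']
          congr 2
          omega
      _ = x (v, i) * ((∏ j ∈ univ.erase i, x (v, j)) * S v) := h3
      _ = Y v * S v := by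
          rw [← mul_assoc,
            show x (v, i) * ∏ j ∈ univ.erase i, x (v, j) = Y v from
              Finset.mul_prod_erase univ (fun j => x (v, j)) (Finset.mem_univ i)]
  -- Y v ≠ 0 for v ∈ U
  have hYne : ∀ v ∈ U, Y v ≠ 0 := by
    intro v hv hY0
    rw [hU] at hv
    obtain ⟨i, hi⟩ := hv
    have := hkey v i
    rw [hY0, zero_mul, mul_eq_zero] at this
    rcases this with h | h
    · exact hlam h
    · exact hi (pow_eq_zero_iff hk0 |>.1 h)
  -- Y v = 0 for v ∉ U
  have hYzero : ∀ v : V, v ∉ U → Y v = 0 := by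
    intro v hv
    rw [hU] at hv
    simp only [Set.mem_setOf_eq, not_exists, not_not] at hv
    exact Finset.prod_eq_zero (Finset.mem_univ ⟨0, hs0⟩) (hv _)
  -- lam * Y v = S v for v ∈ U
  have hmain : ∀ v ∈ U, lam * Y v = S v := by
    intro v hv
    have hYv := hYne v hv
    obtain ⟨i, -⟩ : ∃ i : Fin s, True := ⟨⟨0, hs0⟩, trivial⟩
    -- all x(v,j)^k are equal
    have hconst : ∀ j : Fin s, x (v, j) ^ k = x (v, i) ^ k := by
      intro j
      have := (hkey v j).trans (hkey v i).symm
      exact mul_left_cancel₀ hlam this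
    have hYk : Y v ^ k = (x (v, i) ^ k) ^ s := by
      show (∏ j : Fin s, x (v, j)) ^ k = (x (v, i) ^ k) ^ s
      rw [← Finset.prod_pow]
      rw [Finset.prod_congr rfl (fun j _ => hconst j)]
      simp [Finset.card_univ]
    have hsq : Y v ^ 2 = x (v, i) ^ k := by
      have h1 : (Y v ^ 2) ^ s = (x (v, i) ^ k) ^ s := by
        rw [← pow_mul, ← hks, hYk]
      exact (pow_left_inj₀ (sq_nonneg _) (Even.pow_nonneg ⟨s, by omega⟩ _) (by omega)).1 h1
    have := hkey v i
    rw [← hsq] at this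
    have h2 : Y v * (lam * Y v) = Y v * S v := by ring_nf; ring_nf at this; linarith [this]
    exact mul_left_cancel₀ hYv h2
  -- conclusion
  constructor
  · -- y ≠ 0
    have : ∃ p : V × Fin s, x p ≠ 0 := by
      by_contra h
      push_neg at h
      exact hx (funext h)
    obtain ⟨⟨v, i⟩, hp⟩ := this
    have hvU : v ∈ U := by rw [hU]; exact ⟨i, hp⟩
    intro h0
    apply hYne v hvU
    have := congrFun h0 ⟨v, hvU⟩
    rw [hy ⟨v, hvU⟩] at this
    simpa [hYdef] using this
  · funext u
    rw [Matrix.mulVec, Pi.smul_apply]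
    show (∑ w : U, (if G.Adj u.1 w.1 then (1:ℝ) else 0) * y w) = lam * y u
    have hterm : ∀ w : U, (if G.Adj u.1 w.1 then (1:ℝ) else 0) * y w
        = (if G.Adj u.1 w.1 then (1:ℝ) else 0) * Y w.1 := by
      intro w; rw [hy w]
    rw [Finset.sum_congr rfl (fun w _ => hterm w)]
    have hsum : (∑ w : U, (if G.Adj u.1 w.1 then (1:ℝ) else 0) * Y w.1)
        = ∑ w : V, (if G.Adj u.1 w then (1:ℝ) else 0) * Y w := by
      rw [Finset.sum_set_coe (f := fun w => (if G.Adj u.1 w then (1:ℝ) else 0) * Y w)]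
      refine Finset.sum_subset (Finset.subset_univ _) ?_
      intro w _ hw
      rw [Set.mem_toFinset] at hw
      rw [hYzero w hw, mul_zero]
    rw [hsum]
    have : (∑ w : V, (if G.Adj u.1 w then (1:ℝ) else 0) * Y w) = S u.1 := by
      rw [hSdef]
      simp [Finset.sum_filter, ite_mul, one_mul, zero_mul]
    rw [this, ← hmain u.1 u.2, hy u]
end

section
/- Let G be a finite simple graph, let k ≥ 4 be an even integer with s = k/2, and suppose λ is a signless Laplacian H-eigenvalue of the generalized power hypergraph G^{k,k/2} with H-eigenvector x, where λ ≠ deg_G(v) for every v ∈ V(G). Let U = {v ∈ V(G) : x_{(v,i)} ≠ 0 for some i ∈ {1,…,s}}. Then the vector y : U → ℝ defined by y_u = Π_{i=1}^{s} x_{(u,i)} is nonzero and satisfies Q(G)[U] y = λ y; in particular, λ is an eigenvalue of the principal submatrix Q(G)[U] of the signless Laplacian matrix of G. -/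
open Finset

set_option linter.unusedSectionVars false

section Aux

variable {V : Type*} [Fintype V] [DecidableEq V]

def hedge (s : ℕ) (a b : V) : Finset (V × Fin s) :=
  ({a} ×ˢ (Finset.univ : Finset (Fin s))) ∪ ({b} ×ˢ Finset.univ)

lemma mem_hedge {s : ℕ} {a b : V} {p : V × Fin s} :
    p ∈ hedge s a b ↔ p.1 = a ∨ p.1 = b := by
  obtain ⟨w, j⟩ := p
  simp [hedge, Prod.ext_iff, eq_comm]

lemma hedge_comm (s : ℕ) (a b : V) : hedge s a b = hedge s b a :=
  Finset.union_comm _ _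

variable (G : SimpleGraph V) [DecidableRel G.Adj]

lemma powerEdges_eq (s : ℕ) :
    powerEdges G s = (Finset.univ.filter fun p : V × V => G.Adj p.1 p.2).image
      (fun p => hedge s p.1 p.2) := rfl

lemma filter_powerEdges (s : ℕ) (v : V) (i : Fin s) :
    (powerEdges G s).filter (fun e => (v, i) ∈ e)
      = (G.neighborFinset v).image (hedge s v) := by
  ext e
  simp only [powerEdges_eq, Finset.mem_filter, Finset.mem_image,
    SimpleGraph.mem_neighborFinset, Finset.mem_univ, true_and]
  constructor
  · rintro ⟨⟨⟨a, b⟩, hp, rfl⟩, hmem⟩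
    rcases mem_hedge.1 hmem with h | h
    · have h' : v = a := h
      subst h'
      exact ⟨b, hp, rfl⟩
    · have h' : v = b := h
      subst h'
      exact ⟨a, hp.symm, hedge_comm s v a⟩
  · rintro ⟨u, hu, rfl⟩
    exact ⟨⟨(v, u), by simpa using hu, rfl⟩, mem_hedge.2 (Or.inl rfl)⟩

lemma hedge_injOn (s : ℕ) (hs : 0 < s) (v : V) :
    Set.InjOn (hedge s v) (G.neighborFinset v) := by
  intro a ha b hb h
  have hmem : ((a : V), (⟨0, hs⟩ : Fin s)) ∈ hedge s v b :=
    h ▸ mem_hedge.2 (Or.inr rfl)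
  rcases mem_hedge.1 hmem with h' | h'
  · exact absurd h' (G.adj_symm (by simpa using ha)).ne
  · exact h'

lemma hedge_erase {s : ℕ} (v u : V) (huv : u ≠ v) (i : Fin s) :
    (hedge s v u).erase (v, i)
      = ({v} ×ˢ (Finset.univ.erase i)) ∪ ({u} ×ˢ Finset.univ) := by
  ext ⟨w, j⟩
  simp only [hedge, Finset.mem_erase, Finset.mem_union, Finset.mem_product,
    Finset.mem_singleton, Finset.mem_univ, and_true, true_and, Prod.mk.injEq, ne_eq, not_and]
  constructor
  · rintro ⟨hne, h | h⟩
    · exact Or.inl ⟨h, fun hj => hne h hj⟩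
    · exact Or.inr h
  · rintro (⟨hw, hj⟩ | h)
    · exact ⟨fun _ hj' => hj hj', Or.inl hw⟩
    · exact ⟨fun hw _ => absurd (by rw [← h, hw]) huv, Or.inr h⟩

lemma prod_hedge_erase {s : ℕ} (x : V × Fin s → ℝ) (v u : V) (huv : u ≠ v) (i : Fin s) :
    ∏ w ∈ (hedge s v u).erase (v, i), x w
      = (∏ j ∈ Finset.univ.erase i, x (v, j)) * ∏ j, x (u, j) := by
  have hdisj : Disjoint (({v} : Finset V) ×ˢ (Finset.univ.erase i))
      (({u} : Finset V) ×ˢ (Finset.univ : Finset (Fin s))) := by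
    rw [Finset.disjoint_left]
    rintro ⟨w, j⟩ hw hu
    simp only [Finset.mem_product, Finset.mem_singleton] at hw hu
    exact huv (by rw [← hu.1, hw.1])
  rw [hedge_erase v u huv i, Finset.prod_union hdisj, Finset.prod_product,
    Finset.prod_product, Finset.prod_singleton, Finset.prod_singleton]

lemma key_eq {k s : ℕ} (hs : 0 < s) {lam : ℝ} {x : V × Fin s → ℝ}
    (heig : IsQHEigPow G k s lam x) (v : V) (i : Fin s) :
    lam * x (v, i) ^ (k - 1)
      = (G.degree v : ℝ) * x (v, i) ^ (k - 1)
        + (∏ j ∈ Finset.univ.erase i, x (v, j))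
            * ∑ u ∈ G.neighborFinset v, ∏ j, x (u, j) := by
  have h := heig.2 (v, i)
  rw [filter_powerEdges] at h
  rw [Finset.card_image_of_injOn (hedge_injOn G s hs v),
    Finset.sum_image (hedge_injOn G s hs v)] at h
  rw [h]
  congr 1
  rw [Finset.mul_sum]
  refine Finset.sum_congr rfl fun u hu => ?_
  exact prod_hedge_erase x v u (G.adj_symm (by simpa using hu)).ne i

end Aux

section Core

variable {V : Type*} [Fintype V] [DecidableEq V] (G : SimpleGraph V) [DecidableRel G.Adj]

lemma core_lemma {k s : ℕ} (hk : 4 ≤ k) (hks : k = 2 * s) {lam : ℝ} {x : V × Fin s → ℝ}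
    (hlam : ∀ v : V, lam ≠ (G.degree v : ℝ)) (heig : IsQHEigPow G k s lam x)
    (v : V) (hv : ∃ i : Fin s, x (v, i) ≠ 0) :
    (∀ j : Fin s, x (v, j) ≠ 0) ∧
      (lam - (G.degree v : ℝ)) * ∏ j, x (v, j)
        = ∑ u ∈ G.neighborFinset v, ∏ j, x (u, j) := by
  have hs : 0 < s := by omega
  have hld : lam - (G.degree v : ℝ) ≠ 0 := sub_ne_zero.2 (hlam v)
  set S : ℝ := ∑ u ∈ G.neighborFinset v, ∏ j, x (u, j) with hS
  have hkey : ∀ i : Fin s, (lam - (G.degree v : ℝ)) * x (v, i) ^ (k - 1)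
      = (∏ j ∈ Finset.univ.erase i, x (v, j)) * S := by
    intro i
    have h := key_eq G hs heig v i
    rw [sub_mul]
    linarith [h]
  -- all coordinates nonzero
  have hnz : ∀ j : Fin s, x (v, j) ≠ 0 := by
    intro j
    by_contra hj

    obtain ⟨i, hi⟩ := hv
    have hij : j ≠ i := by rintro rfl; exact hi hj
    have h := hkey i
    rw [Finset.prod_eq_zero (Finset.mem_erase.2 ⟨hij, Finset.mem_univ j⟩) hj,
      zero_mul] at h
    exact mul_ne_zero hld (pow_ne_zero _ hi) h
  refine ⟨hnz, ?_⟩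
  set yv : ℝ := ∏ j, x (v, j) with hyv
  have hyvne : yv ≠ 0 := Finset.prod_ne_zero_iff.2 fun j _ => hnz j
  -- multiplied equation
  have hmul : ∀ i : Fin s, (lam - (G.degree v : ℝ)) * x (v, i) ^ k = yv * S := by
    intro i
    have h := hkey i
    have h2 := congrArg (· * x (v, i)) h
    rw [mul_assoc, ← pow_succ] at h2
    have hk1 : k - 1 + 1 = k := by omega
    rw [hk1] at h2
    rw [h2, mul_assoc, mul_comm S (x (v, i)), ← mul_assoc,
      Finset.prod_erase_mul _ _ (Finset.mem_univ i)]
  set i0 : Fin s := ⟨0, hs⟩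
  set c : ℝ := x (v, i0) ^ k with hc
  have hcpos : 0 < c := by
    have h1 : c = (x (v, i0) ^ s) ^ 2 := by rw [hc, hks, mul_comm 2 s, pow_mul]
    rw [h1]
    exact lt_of_le_of_ne (sq_nonneg _) (Ne.symm (pow_ne_zero 2 (pow_ne_zero s (hnz i0))))
  have hall : ∀ i : Fin s, x (v, i) ^ k = c := by
    intro i
    have := (hmul i).trans (hmul i0).symm
    exact mul_left_cancel₀ hld this
  have hyk : yv ^ k = c ^ s := by
    rw [hyv, ← Finset.prod_pow]
    rw [Finset.prod_congr rfl fun i _ => hall i, Finset.prod_const,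
      Finset.card_univ, Fintype.card_fin]
  have hy2 : yv ^ 2 = c := by
    have h1 : (yv ^ 2) ^ s = c ^ s := by
      rw [← pow_mul, ← hks]; exact hyk
    exact (pow_left_inj₀ (sq_nonneg _) hcpos.le (by omega)).1 h1
  have := hmul i0
  rw [← hc, ← hy2] at this
  have h3 : ((lam - (G.degree v : ℝ)) * yv) * yv = S * yv := by
    rw [mul_comm S yv, ← this]; ring
  exact mul_right_cancel₀ hyvne h3

end Core

lemma sum_elem_helper {V : Type*} [Fintype V] [DecidableEq V] (S : Set V)
    (inst : Fintype S) (F : V → ℝ) (hF : ∀ w, w ∉ S → F w = 0) :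
    (∑ w : S, F ↑w) = ∑ w, F w := by
  classical
  have h1 : (∑ w ∈ Finset.univ.filter (· ∈ S), F w) = ∑ w : S, F ↑w :=
    Finset.sum_subtype _ (by simp) F
  rw [← h1]
  refine Finset.sum_subset (Finset.filter_subset _ _) fun w _ hw => ?_
  exact hF w (by simpa using hw)


open scoped Classical in
/-- if `λ` is a signless Laplacian H-eigenvalue of `G^{k,k/2}` with
H-eigenvector `x`, `λ ≠ deg_G(v)` for every vertex `v`, and
`U = {v : x is nonzero somewhere on the half edge of v}`, then the vector
`y_u = Π_i x_{(u,i)}` on `U` is nonzero and is an eigenvector of the principal submatrix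
`Q(G)[U]` of the signless Laplacian matrix of `G` for the eigenvalue `λ`. -/
theorem stmt10 {V : Type*} [Fintype V] [DecidableEq V] (G : SimpleGraph V)
    [DecidableRel G.Adj] (k s : ℕ) (hk : 4 ≤ k) (hks : k = 2 * s)
    (lam : ℝ) (x : V × Fin s → ℝ) (hlam : ∀ v : V, lam ≠ (G.degree v : ℝ))
    (heig : IsQHEigPow G k s lam x)
    (U : Set V) (hU : U = {v : V | ∃ i : Fin s, x (v, i) ≠ 0})
    (y : U → ℝ) (hy : ∀ u : U, y u = ∏ i : Fin s, x (u.1, i)) :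
    y ≠ 0 ∧
      (Matrix.of fun u w : U =>
          (if (u : V) = (w : V) then (G.degree (u : V) : ℝ) else 0)
            + (if G.Adj u.1 w.1 then (1 : ℝ) else 0)).mulVec y
        = lam • y := by
  subst hU
  have hs : 0 < s := by omega
  constructor
  · -- y ≠ 0
    obtain ⟨p, hp⟩ := Function.ne_iff.1 heig.1
    simp only [Pi.zero_apply] at hp
    have hpU : p.1 ∈ {v : V | ∃ i : Fin s, x (v, i) ≠ 0} := ⟨p.2, hp⟩
    intro h0
    have h1 : y ⟨p.1, hpU⟩ = 0 := by rw [h0]; rfl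
    rw [hy] at h1
    exact Finset.prod_ne_zero_iff.2
      (fun j _ => (core_lemma G hk hks hlam heig p.1 ⟨p.2, hp⟩).1 j) h1
  · funext u
    have hcore := core_lemma G hk hks hlam heig u.1 u.2
    simp only [Matrix.mulVec, Matrix.of_apply, dotProduct, Pi.smul_apply,
      smul_eq_mul]
    have hsplit : ∀ w : {v : V | ∃ i : Fin s, x (v, i) ≠ 0},
        ((if (u : V) = (w : V) then (G.degree (u : V) : ℝ) else 0)
            + (if G.Adj u.1 w.1 then (1 : ℝ) else 0)) * y w
          = (if u = w then (G.degree (u : V) : ℝ) * y w else 0)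
            + (if G.Adj u.1 w.1 then y w else 0) := by
      intro w
      simp only [add_mul, ite_mul, zero_mul, one_mul, Subtype.coe_inj]
    rw [Finset.sum_congr rfl fun w _ => hsplit w, Finset.sum_add_distrib]
    simp only [Finset.sum_ite_eq, Finset.mem_univ, if_true]
    -- second sum
    have hfin : (↑(G.degree (u : V)) : ℝ) * y u
        + (∑ w ∈ G.neighborFinset u.1, ∏ j, x (w, j)) = lam * y u := by
      rw [← hcore.2, ← hy u]; ring
    refine Eq.trans (congrArg (fun t => (↑(G.degree (u : V)) : ℝ) * y u + t) ?_) hfin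
    refine Eq.trans (Finset.sum_congr rfl fun w _ =>
      (by rw [hy w] :
        (if G.Adj u.1 w.1 then y w else 0)
          = (fun v : V => if G.Adj u.1 v then ∏ j, x (v, j) else 0) w.1)) ?_
    refine Eq.trans (sum_elem_helper {v : V | ∃ i : Fin s, x (v, i) ≠ 0} _
      (fun v : V => if G.Adj u.1 v then ∏ j, x (v, j) else 0) ?_) ?_
    · intro w hw
      simp only [Set.mem_setOf_eq, not_exists, ne_eq, not_not] at hw
      by_cases hadj : G.Adj u.1 w
      · simp only [if_pos hadj]
        exact Finset.prod_eq_zero (Finset.mem_univ (⟨0, hs⟩ : Fin s)) (hw ⟨0, hs⟩)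
      · simp only [if_neg hadj]
    · rw [← Finset.sum_filter]
      refine Finset.sum_congr ?_ fun w _ => rfl
      ext w
      simp [SimpleGraph.mem_neighborFinset]
end

section
/- Let G be a finite simple graph and let k ≥ 4 be an even integer. Then every eigenvalue of the adjacency matrix A(G) of G is an adjacency H-eigenvalue of the generalized power hypergraph G^{k,k/2}. -/
open Finset

/-- every eigenvalue of the adjacency matrix `A(G)` of a finite simple graph
`G` is an adjacency H-eigenvalue of the generalized power hypergraph `G^{k,k/2}`. -/
theorem stmt11 {V : Type*} [Fintype V] [DecidableEq V] (G : SimpleGraph V)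
    [DecidableRel G.Adj] (k s : ℕ) (hk : 4 ≤ k) (hks : k = 2 * s)
    (lam : ℝ)
    (hlam : ∃ y : V → ℝ, y ≠ 0 ∧ (G.adjMatrix ℝ).mulVec y = lam • y) :
    ∃ x : V × Fin s → ℝ, IsAdjHEigPow G k s lam x := by
  obtain ⟨y, hy0, hy⟩ := hlam
  have hs2 : 2 ≤ s := by omega
  have hs0 : 0 < s := by omega
  set j0 : Fin s := ⟨0, hs0⟩ with hj0
  set r : V → ℝ := fun v => |y v| ^ ((s:ℝ)⁻¹) with hr
  have hrnn : ∀ v, 0 ≤ r v := fun v => Real.rpow_nonneg (abs_nonneg _) _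
  have hrpow : ∀ v, r v ^ s = |y v| := by
    intro v
    rw [hr]
    rw [← Real.rpow_natCast (|y v| ^ ((s:ℝ)⁻¹)) s, ← Real.rpow_mul (abs_nonneg _),
      inv_mul_cancel₀ (by positivity : (s:ℝ) ≠ 0), Real.rpow_one]
  set x : V × Fin s → ℝ :=
    fun p => (if y p.1 < 0 ∧ p.2 = j0 then (-1:ℝ) else 1) * r p.1 with hx
  -- product over all copies of v gives y v
  have hprod : ∀ v : V, ∏ i : Fin s, x (v, i) = y v := by
    intro v
    have : ∏ i : Fin s, x (v, i)
        = (∏ i : Fin s, (if y v < 0 ∧ i = j0 then (-1:ℝ) else 1)) * r v ^ s := by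
      simp only [hx]
      rw [Finset.prod_mul_distrib, Finset.prod_const, Finset.card_univ, Fintype.card_fin]
    rw [this, hrpow]
    by_cases hv : y v < 0
    · have : (∏ i : Fin s, (if y v < 0 ∧ i = j0 then (-1:ℝ) else 1))
          = ∏ i : Fin s, (if i = j0 then (-1:ℝ) else 1) := by
        apply Finset.prod_congr rfl
        intro i _
        simp [hv]
      rw [this, Finset.prod_ite_eq' Finset.univ j0 (fun _ => (-1:ℝ))]
      simp [abs_of_neg hv]
    · have : (∏ i : Fin s, (if y v < 0 ∧ i = j0 then (-1:ℝ) else 1)) = 1 := by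
        apply Finset.prod_eq_one
        intro i _
        simp [hv]
      rw [this]
      simp [abs_of_nonneg (not_lt.mp hv)]
  have hsq : ∀ v (i : Fin s), (x (v, i))^2 = (r v)^2 := by
    intro v i
    rw [hx]
    by_cases h : y v < 0 ∧ i = j0 <;> simp [h, mul_pow]
  refine ⟨x, ?_, ?_⟩
  · -- x ≠ 0
    intro hxz
    apply hy0
    funext v
    have := hprod v
    rw [hxz] at this
    simpa [zero_pow hs0.ne'] using this.symm
  · intro p
    obtain ⟨v, j⟩ := p
    -- the filtered edge set
    have hfilter : (powerEdges G s).filter (fun e => (v, j) ∈ e)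
        = (G.neighborFinset v).image
            (fun u => ({v} ×ˢ (Finset.univ : Finset (Fin s)))
              ∪ ({u} ×ˢ (Finset.univ : Finset (Fin s)))) := by
      ext e
      simp only [Finset.mem_filter, powerEdges, Finset.mem_image,
        SimpleGraph.mem_neighborFinset, Finset.mem_filter, Finset.mem_univ, true_and]
      constructor
      · rintro ⟨⟨⟨a, b⟩, hab, rfl⟩, hp⟩
        simp only [Finset.mem_union, Finset.mem_product, Finset.mem_singleton,
          Finset.mem_univ, and_true] at hp
        rcases hp with rfl | rfl
        · exact ⟨b, hab, rfl⟩
        · exact ⟨a, hab.symm, Finset.union_comm _ _⟩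
      · rintro ⟨u, hu, rfl⟩
        refine ⟨⟨(v, u), hu, rfl⟩, ?_⟩
        simp
    rw [hfilter]
    -- the image map is injective on neighbors
    have hinj : Set.InjOn (fun u => ({v} ×ˢ (Finset.univ : Finset (Fin s)))
              ∪ ({u} ×ˢ (Finset.univ : Finset (Fin s)))) (G.neighborFinset v) := by
      intro u1 h1 u2 h2 he
      replace he : ({v} ×ˢ (Finset.univ : Finset (Fin s)))
              ∪ ({u1} ×ˢ (Finset.univ : Finset (Fin s)))
          = ({v} ×ˢ (Finset.univ : Finset (Fin s)))
              ∪ ({u2} ×ˢ (Finset.univ : Finset (Fin s))) := he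
      simp only [Finset.coe_mem, SimpleGraph.mem_neighborFinset, Finset.mem_coe] at h1 h2
      have hne1 : u1 ≠ v := fun h => G.irrefl (h ▸ h1)
      have : (u1, j0) ∈ ({v} ×ˢ (Finset.univ : Finset (Fin s)))
              ∪ ({u2} ×ˢ (Finset.univ : Finset (Fin s))) := by
        rw [← he]; simp
      simp only [Finset.mem_union, Finset.mem_product, Finset.mem_singleton,
        Finset.mem_univ, and_true] at this
      rcases this with h | h
      · exact absurd h hne1
      · exact h
    rw [Finset.sum_image hinj]
    -- compute each summand
    have hterm : ∀ u ∈ G.neighborFinset v,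
        ∏ w ∈ (({v} ×ˢ (Finset.univ : Finset (Fin s)))
              ∪ ({u} ×ˢ (Finset.univ : Finset (Fin s)))).erase (v, j), x w
        = (∏ i ∈ Finset.univ.erase j, x (v, i)) * y u := by
      intro u hu
      rw [SimpleGraph.mem_neighborFinset] at hu
      have hne : u ≠ v := fun h => G.irrefl (h ▸ hu)
      have hset : (({v} ×ˢ (Finset.univ : Finset (Fin s)))
              ∪ ({u} ×ˢ (Finset.univ : Finset (Fin s)))).erase (v, j)
          = ({v} ×ˢ (Finset.univ.erase j)) ∪ ({u} ×ˢ (Finset.univ : Finset (Fin s))) := by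
        ext ⟨a, b⟩
        simp only [Finset.mem_erase, Finset.mem_union, Finset.mem_product,
          Finset.mem_singleton, Finset.mem_univ, and_true, Ne, Prod.mk.injEq, not_and]
        constructor
        · rintro ⟨hne2, (rfl | rfl)⟩
          · exact Or.inl ⟨rfl, hne2 rfl⟩
          · exact Or.inr rfl
        · rintro (⟨rfl, hb⟩ | rfl)
          · exact ⟨fun _ => hb, Or.inl rfl⟩
          · exact ⟨fun h => absurd h hne, Or.inr rfl⟩
      rw [hset, Finset.prod_union (by
        rw [Finset.disjoint_left]
        rintro ⟨a, b⟩ ha hb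
        simp only [Finset.mem_product, Finset.mem_singleton] at ha hb
        exact hne (hb.1 ▸ ha.1))]
      congr 1
      · rw [Finset.prod_product]
        simp
      · rw [Finset.prod_product]
        simp [hprod u]
    rw [Finset.sum_congr rfl hterm, ← Finset.mul_sum]
    -- eigen equation for y at v
    have heig : ∑ u ∈ G.neighborFinset v, y u = lam * y v := by
      have := congrFun hy v
      rw [SimpleGraph.adjMatrix_mulVec_apply] at this
      simpa using this
    rw [heig]
    -- algebra
    have hyv : y v = x (v, j) * ∏ i ∈ Finset.univ.erase j, x (v, i) := by
      rw [← hprod v]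
      exact (Finset.mul_prod_erase Finset.univ (fun i => x (v, i)) (Finset.mem_univ j)).symm
    rw [hyv]
    have hPsq : (∏ i ∈ Finset.univ.erase j, x (v, i))^2 = ((r v)^2)^(s-1) := by
      rw [← Finset.prod_pow]
      rw [Finset.prod_congr rfl (fun i _ => hsq v i), Finset.prod_const,
        Finset.card_erase_of_mem (Finset.mem_univ j), Finset.card_univ, Fintype.card_fin]
    have hxpow : x (v, j) ^ (k - 1) = x (v, j) * ((r v)^2)^(s-1) := by
      have hk1 : k - 1 = 1 + 2 * (s - 1) := by omega
      rw [hk1, pow_add, pow_mul, pow_one, hsq v j]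
    rw [hxpow]
    set P := ∏ i ∈ Finset.univ.erase j, x (v, i) with hP
    have : P * (lam * (x (v, j) * P)) = lam * (x (v, j) * ((r v)^2)^(s-1)) := by
      rw [← hPsq]; ring
    rw [this]
end

section
/- Let G be a finite simple graph and let k ≥ 4 be an even integer. Then every eigenvalue of the signless Laplacian matrix Q(G) = D(G) + A(G) of G is a signless Laplacian H-eigenvalue of the generalized power hypergraph G^{k,k/2}. -/
open Finset

section Aux

set_option linter.unusedSectionVars false

variable {V : Type*} [Fintype V] [DecidableEq V] (G : SimpleGraph V) [DecidableRel G.Adj] {s : ℕ}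

/-- The blown-up edge corresponding to the graph edge `{v, u}`. -/
def powE (v u : V) (s : ℕ) : Finset (V × Fin s) :=
  ({v} ×ˢ (Finset.univ : Finset (Fin s))) ∪ ({u} ×ˢ (Finset.univ : Finset (Fin s)))

lemma mem_powE {v u w : V} {j : Fin s} : (w, j) ∈ powE v u s ↔ w = v ∨ w = u := by
  simp only [powE, Finset.mem_union, Finset.mem_product, Finset.mem_singleton, Finset.mem_univ,
    and_true]

lemma powE_comm (v u : V) (s : ℕ) : powE v u s = powE u v s := Finset.union_comm _ _

lemma filter_powerEdges_eq (v : V) (i : Fin s) :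
    (powerEdges G s).filter (fun e => (v, i) ∈ e)
      = (G.neighborFinset v).image (fun u => powE v u s) := by
  ext e
  simp only [powerEdges, Finset.mem_filter, Finset.mem_image, SimpleGraph.mem_neighborFinset,
    Finset.mem_univ, true_and, Finset.filter_univ_mem]
  constructor
  · rintro ⟨⟨p, hadj, rfl⟩, hmem⟩
    rcases mem_powE.mp hmem with h | h
    · exact ⟨p.2, h ▸ hadj, by rw [← h]; rfl⟩
    · exact ⟨p.1, h ▸ hadj.symm, by rw [← h, powE_comm]; rfl⟩
  · rintro ⟨u, hadj, rfl⟩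
    exact ⟨⟨⟨v, u⟩, hadj, rfl⟩, mem_powE.mpr (Or.inl rfl)⟩

lemma powE_injOn (v : V) (hs : 0 < s) :
    ∀ u ∈ G.neighborFinset v, ∀ u' ∈ G.neighborFinset v, powE v u s = powE v u' s → u = u' := by
  intro u hu u' hu' h
  have hadj : G.Adj v u := by simpa using hu
  have h1 : (u, (⟨0, hs⟩ : Fin s)) ∈ powE v u' s := h ▸ mem_powE.mpr (Or.inr rfl)
  rcases mem_powE.mp h1 with h2 | h2
  · exact absurd h2 (G.ne_of_adj hadj.symm)
  · exact h2

lemma prod_singleton_product (x : V × Fin s → ℝ) (u : V) (t : Finset (Fin s)) :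
    ∏ w ∈ ({u} ×ˢ t), x w = ∏ j ∈ t, x (u, j) := by
  rw [Finset.prod_product, Finset.prod_singleton]

lemma erase_powE (v u : V) (huv : u ≠ v) (i : Fin s) :
    (powE v u s).erase (v, i) = ({v} ×ˢ ((Finset.univ : Finset (Fin s)).erase i))
      ∪ ({u} ×ˢ (Finset.univ : Finset (Fin s))) := by
  ext ⟨w, j⟩
  simp only [powE, Finset.mem_erase, Finset.mem_union, Finset.mem_product, Finset.mem_singleton,
    Finset.mem_univ, and_true, ne_eq, Prod.mk.injEq, not_and]
  constructor
  · rintro ⟨hne, h | h⟩ <;> tauto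
  · rintro (⟨hw, hj⟩ | hw) <;> [tauto; exact ⟨fun h1 => absurd (hw ▸ h1) huv, Or.inr hw⟩]

lemma prod_erase_powE (x : V × Fin s → ℝ) (v u : V) (huv : u ≠ v) (i : Fin s) :
    ∏ w ∈ (powE v u s).erase (v, i), x w
      = (∏ j ∈ (Finset.univ : Finset (Fin s)).erase i, x (v, j)) * ∏ j, x (u, j) := by
  rw [erase_powE v u huv i, Finset.prod_union, prod_singleton_product, prod_singleton_product]
  rw [Finset.disjoint_left]
  rintro ⟨w, j⟩ hw hu
  simp only [Finset.mem_product, Finset.mem_singleton] at hw hu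
  exact huv (hu.1 ▸ hw.1)

end Aux

/-- every eigenvalue of the signless Laplacian matrix `Q(G) = D(G) + A(G)` of
a finite simple graph `G` is a signless Laplacian H-eigenvalue of the generalized power
hypergraph `G^{k,k/2}`. -/
theorem stmt12 {V : Type*} [Fintype V] [DecidableEq V] (G : SimpleGraph V)
    [DecidableRel G.Adj] (k s : ℕ) (hk : 4 ≤ k) (hks : k = 2 * s)
    (lam : ℝ)
    (hlam : ∃ y : V → ℝ, y ≠ 0 ∧
      (Matrix.of fun u w : V =>
          (if u = w then (G.degree u : ℝ) else 0)
            + (if G.Adj u w then (1 : ℝ) else 0)).mulVec y = lam • y) :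
    ∃ x : V × Fin s → ℝ, IsQHEigPow G k s lam x := by
  obtain ⟨y, hy0, hy⟩ := hlam
  have hs2 : 2 ≤ s := by omega
  have hs0 : 0 < s := by omega
  -- pointwise eigenvalue equation
  have heig : ∀ v, (G.degree v : ℝ) * y v + ∑ u ∈ G.neighborFinset v, y u = lam * y v := by
    intro v
    have h := congrFun hy v
    simp only [Matrix.mulVec, Matrix.of_apply, dotProduct, Pi.smul_apply, smul_eq_mul,
      add_mul, Finset.sum_add_distrib, ite_mul, zero_mul, one_mul,
      Finset.sum_ite_eq, Finset.mem_univ, if_true] at h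
    rw [SimpleGraph.neighborFinset_eq_filter, Finset.sum_filter]
    exact h
  set a : V → ℝ := fun v => |y v| ^ ((s : ℝ)⁻¹) with hadef
  set sg : V → ℝ := fun v => if y v < 0 then -1 else 1 with hsgdef
  have hsg1 : ∀ v, sg v = 1 ∨ sg v = -1 := by
    intro v; by_cases h : y v < 0 <;> simp [hsgdef, h]
  have hapow : ∀ v, a v ^ s = |y v| := by
    intro v
    simpa [hadef] using Real.rpow_inv_natCast_pow (abs_nonneg (y v)) hs0.ne'
  have hsa : ∀ v, sg v * a v ^ s = y v := by
    intro v
    rw [hapow]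
    by_cases h : y v < 0
    · simp only [hsgdef, if_pos h]; rw [abs_of_neg h]; ring
    · simp only [hsgdef, if_neg h]; rw [abs_of_nonneg (le_of_not_gt h)]; ring
  have hsodd : ∀ v, sg v ^ (2 * s - 1) = sg v := by
    intro v
    rcases hsg1 v with h | h <;> rw [h]
    · exact one_pow _
    · exact Odd.neg_one_pow ⟨s - 1, by omega⟩
  set i0 : Fin s := ⟨0, hs0⟩ with hi0
  set x : V × Fin s → ℝ := fun p => if p.2 = i0 then sg p.1 * a p.1 else a p.1 with hxdef
  -- value lemmas for x
  have hx0 : ∀ u : V, x (u, i0) = sg u * a u := by intro u; simp [hxdef]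
  have hxne : ∀ (u : V) (j : Fin s), j ≠ i0 → x (u, j) = a u := by
    intro u j hj; simp [hxdef, hj]
  have perase : ∀ u : V, ∏ j ∈ (Finset.univ : Finset (Fin s)).erase i0, x (u, j)
      = a u ^ (s - 1) := by
    intro u
    rw [Finset.prod_congr rfl (fun j hj => hxne u j (Finset.mem_erase.mp hj).1),
      Finset.prod_const, Finset.card_erase_of_mem (Finset.mem_univ _), Finset.card_univ,
      Fintype.card_fin]
  have pfull : ∀ u : V, ∏ j, x (u, j) = y u := by
    intro u
    rw [← Finset.mul_prod_erase Finset.univ _ (Finset.mem_univ i0), hx0, perase,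
      mul_assoc]
    rw [show a u * a u ^ (s - 1) = a u ^ s by
      rw [← pow_succ']; congr 1; omega]
    exact hsa u
  refine ⟨x, ?_, ?_⟩
  · -- x ≠ 0
    obtain ⟨v, hv⟩ := Function.ne_iff.mp hy0
    intro h
    apply hv
    rw [← pfull v]
    rw [h]
    simp [hs0.ne']
  · rintro ⟨v, i⟩
    rw [filter_powerEdges_eq G v i,
      Finset.card_image_of_injOn (fun u hu u' hu' h =>
        powE_injOn G v hs0 u (by simpa using hu) u' (by simpa using hu') h),
      Finset.sum_image (powE_injOn G v hs0)]
    have hcard : (G.neighborFinset v).card = G.degree v := rfl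
    rw [hcard]
    have hsum : ∑ u ∈ G.neighborFinset v, ∏ w ∈ (powE v u s).erase (v, i), x w
        = (∏ j ∈ (Finset.univ : Finset (Fin s)).erase i, x (v, j))
          * ∑ u ∈ G.neighborFinset v, y u := by
      rw [Finset.mul_sum]
      refine Finset.sum_congr rfl fun u hu => ?_
      have hadj : G.Adj v u := by simpa using hu
      rw [prod_erase_powE x v u (G.ne_of_adj hadj.symm) i, pfull]
    rw [hsum]
    have hk1 : k - 1 = 2 * s - 1 := by omega
    rw [hk1]
    by_cases hi : i = i0
    · subst hi
      rw [hx0, perase]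
      have key : (sg v * a v) ^ (2 * s - 1) = y v * a v ^ (s - 1) := by
        rw [mul_pow, hsodd v, show 2 * s - 1 = s + (s - 1) by omega, pow_add,
          ← mul_assoc, hsa v]
      rw [key]
      linear_combination (-(a v ^ (s - 1))) * heig v
    · rw [hxne v i hi]
      have hpe : ∏ j ∈ (Finset.univ : Finset (Fin s)).erase i, x (v, j)
          = sg v * a v ^ (s - 1) := by
        have hi0mem : i0 ∈ (Finset.univ : Finset (Fin s)).erase i :=
          Finset.mem_erase.mpr ⟨Ne.symm hi, Finset.mem_univ _⟩
        rw [← Finset.mul_prod_erase _ _ hi0mem, hx0]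
        have hrest : ∏ j ∈ (((Finset.univ : Finset (Fin s)).erase i).erase i0), x (v, j)
            = a v ^ (s - 1 - 1) := by
          rw [Finset.prod_congr rfl (fun j hj => hxne v j (Finset.mem_erase.mp hj).1),
            Finset.prod_const, Finset.card_erase_of_mem hi0mem,
            Finset.card_erase_of_mem (Finset.mem_univ _), Finset.card_univ, Fintype.card_fin]
        rw [hrest, mul_assoc]
        congr 1
        rw [← pow_succ']; congr 1; omega
      rw [hpe]
      have hv := heig v
      rw [← hsa v] at hv
      have e1 : a v ^ (2 * s - 1) = a v ^ s * a v ^ (s - 1) := by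
        rw [← pow_add]; congr 1; omega
      rw [e1]
      rcases hsg1 v with h | h <;> rw [h] at hv ⊢
      · linear_combination (-(a v ^ (s - 1))) * hv
      · linear_combination a v ^ (s - 1) * hv
end
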